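/- arXiv:math/0106088 — 3 statements merged into one kernel-verified Lean document; each statement's English description precedes it below -/
import Mathlib

section
/- A nonzero trigonometric polynomial of degree at most n, i.e., a nonzero function of the form φ(t) = a_0 + Σ_{k=1}^n (a_k cos(kt) + b_k sin(kt)), has at most 2n zeros in the interval [0, 2π), counted with multiplicities. -/
open Real Set

/-- `f` vanishes to order at least `m` at `x`. -/
def VanishesToOrder (f : ℝ → ℝ) (x : ℝ) (m : ℕ) : Prop :=
  ∀ j < m, iteratedDeriv j f x = 0

/-- `f` has at most `N` zeros in `[0, 2π)`, counted with multiplicities: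
for any finite set of points of `[0, 2π)` at which `f` has a zero of (exact)
multiplicity `m x`, the sum of the multiplicities is at most `N`. -/
def ZerosAtMost (f : ℝ → ℝ) (N : ℕ) : Prop :=
  ∀ (s : Finset ℝ) (m : ℝ → ℕ),
    (∀ x ∈ s, x ∈ Set.Ico (0:ℝ) (2*π) ∧ 0 < m x ∧ VanishesToOrder f x (m x) ∧
      iteratedDeriv (m x) f x ≠ 0) →
    ∑ x ∈ s, m x ≤ N

namespace TrigAux
open Polynomial Complex
open scoped ContDiff

noncomputable def Dop (P : ℂ[X]) : ℂ[X] := C I * (X * derivative P)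

lemma eval_Dop_iter (w : ℂ) : ∀ (k : ℕ) (Q : ℂ[X]),
    ((Dop)^[k] ((X - C w) ^ k * Q)).eval w = (k.factorial : ℂ) * (I * w) ^ k * Q.eval w := by
  intro k
  induction k with
  | zero => intro Q; simp
  | succ k ih =>
    intro Q
    have key : Dop ((X - C w) ^ (k + 1) * Q)
        = (X - C w) ^ k *
          (C I * (X * ((C ((k : ℂ) + 1)) * Q + (X - C w) * derivative Q))) := by
      rw [Dop, derivative_mul, derivative_pow, derivative_X_sub_C]
      simp only [Nat.add_sub_cancel, Nat.cast_add, Nat.cast_one]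
      ring
    rw [Function.iterate_succ_apply, key, ih]
    simp only [eval_mul, eval_add, eval_C, eval_X, eval_sub, sub_self, zero_mul, mul_zero,
      add_zero]
    rw [Nat.factorial_succ]
    push_cast
    ring

lemma dvd_of_Dop_eval (w : ℂ) (hw : w ≠ 0) (P : ℂ[X]) :
    ∀ m : ℕ, (∀ j < m, ((Dop)^[j] P).eval w = 0) → (X - C w) ^ m ∣ P := by
  intro m
  induction m with
  | zero => intro _; simp
  | succ m ih =>
    intro h
    obtain ⟨Q, hQ⟩ := ih (fun j hj => h j (hj.trans m.lt_succ_self))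
    have h0 : ((Dop)^[m] P).eval w = 0 := h m m.lt_succ_self
    rw [hQ, eval_Dop_iter] at h0
    have hQw : Q.eval w = 0 := by
      simpa [mul_eq_zero, Nat.factorial_ne_zero, I_ne_zero, hw] using h0
    obtain ⟨R, hR⟩ := dvd_iff_isRoot.mpr hQw
    exact ⟨R, by rw [hQ, hR]; ring⟩

lemma hasDerivAt_evalExp (P : ℂ[X]) (x : ℝ) :
    HasDerivAt (fun t : ℝ => P.eval (Complex.exp ((t : ℂ) * I)))
      ((Dop P).eval (Complex.exp ((x : ℂ) * I))) x := by
  have h0 : HasDerivAt (fun t : ℝ => (t : ℂ) * I) I x := by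
    simpa using (hasDerivAt_id x).ofReal_comp.mul_const I
  have h1 : HasDerivAt (fun t : ℝ => Complex.exp ((t : ℂ) * I))
      (Complex.exp ((x : ℂ) * I) * I) x := by simpa using h0.cexp
  have h2 := ((Polynomial.hasDerivAt P
      (Complex.exp ((x : ℂ) * I))).hasFDerivAt.restrictScalars ℝ).comp_hasDerivAt x h1
  convert h2 using 1
  · rfl
  · rfl
  simp [Dop]
  ring

lemma iteratedDeriv_evalExp (j : ℕ) : ∀ (P : ℂ[X]) (x : ℝ),
    iteratedDeriv j (fun t : ℝ => P.eval (Complex.exp ((t : ℂ) * I))) x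
      = ((Dop)^[j] P).eval (Complex.exp ((x : ℂ) * I)) := by
  induction j with
  | zero => intro P x; simp
  | succ j ih =>
    intro P x
    rw [iteratedDeriv_succ']
    have hder : deriv (fun t : ℝ => P.eval (Complex.exp ((t : ℂ) * I)))
        = fun t : ℝ => (Dop P).eval (Complex.exp ((t : ℂ) * I)) :=
      funext fun t => (hasDerivAt_evalExp P t).deriv
    rw [hder, ih, Function.iterate_succ_apply]

lemma iteratedDeriv_add' {f g : ℝ → ℂ} (hf : ContDiff ℝ ∞ f) (hg : ContDiff ℝ ∞ g)
    (j : ℕ) (x : ℝ) :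
    iteratedDeriv j (fun t => f t + g t) x = iteratedDeriv j f x + iteratedDeriv j g x := by
  have h := iteratedFDeriv_add_apply (i := j) (hf.of_le (by exact_mod_cast le_top)).contDiffAt
    (hg.of_le (by exact_mod_cast le_top)).contDiffAt (x := x)
  simp only [iteratedDeriv]
  rw [show (fun t => f t + g t) = f + g from rfl, h]
  rfl

lemma vanish_mul (x : ℝ) : ∀ (m : ℕ) (g h : ℝ → ℂ), ContDiff ℝ ∞ g → ContDiff ℝ ∞ h →
    (∀ j < m, iteratedDeriv j g x = 0) →
    ∀ j < m, iteratedDeriv j (fun t => h t * g t) x = 0 := by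
  intro m
  induction m with
  | zero => intro g h _ _ _ j hj; omega
  | succ m ih =>
    intro g h hg hh hvan j hj
    match j with
    | 0 =>
      have h0 := hvan 0 (Nat.succ_pos m)
      simp only [iteratedDeriv_zero] at h0 ⊢
      simp [h0]
    | j + 1 =>
      rw [iteratedDeriv_succ']
      have hg' : ContDiff ℝ ∞ (deriv g) := (contDiff_infty_iff_deriv.mp hg).2
      have hh' : ContDiff ℝ ∞ (deriv h) := (contDiff_infty_iff_deriv.mp hh).2
      have hder : deriv (fun t => h t * g t)
          = fun t => deriv h t * g t + h t * deriv g t := by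
        funext t
        exact (((hh.differentiable (by simp)) t).hasDerivAt.mul
          ((hg.differentiable (by simp)) t).hasDerivAt).deriv
      rw [hder]
      rw [iteratedDeriv_add' ((hh'.mul hg)) (hh.mul hg') j x]
      have hj' : j < m := by omega
      rw [ih g (deriv h) hg hh' (fun i hi => hvan i (hi.trans m.lt_succ_self)) j hj',
        ih (deriv g) h (by exact hg') hh
          (fun i hi => by rw [← iteratedDeriv_succ']; exact hvan (i+1) (by omega)) j hj']
      simp

noncomputable def Ptrig (n : ℕ) (a b : ℕ → ℝ) : ℂ[X] :=
  C (a 0 : ℂ) * X ^ n + ∑ k ∈ Finset.Icc 1 n,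
    (C (((a k : ℂ) - (b k : ℂ) * I) / 2) * X ^ (n + k)
      + C (((a k : ℂ) + (b k : ℂ) * I) / 2) * X ^ (n - k))

lemma pow_exp (t : ℝ) (m : ℕ) :
    Complex.exp ((t : ℂ) * I) ^ m = Complex.exp (((m : ℂ) * t) * I) := by
  rw [← Complex.exp_nat_mul]; ring_nf

lemma Ptrig_eval (n : ℕ) (a b : ℕ → ℝ) (t : ℝ) :
    (Ptrig n a b).eval (Complex.exp ((t : ℂ) * I))
      = Complex.exp (((n : ℂ) * t) * I) *
        ((a 0 : ℂ) + ∑ k ∈ Finset.Icc 1 n,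
          ((a k : ℂ) * Complex.cos ((k : ℂ) * t) + (b k : ℂ) * Complex.sin ((k : ℂ) * t))) := by
  have hA : ∀ k : ℕ, Complex.exp ((t : ℂ) * I) ^ (n + k)
      = Complex.exp (((n : ℂ) * t) * I) *
        (Complex.cos ((k : ℂ) * t) + Complex.sin ((k : ℂ) * t) * I) := by
    intro k
    rw [pow_exp, ← Complex.exp_mul_I, ← Complex.exp_add]
    push_cast
    ring_nf
  have hB : ∀ k ∈ Finset.Icc 1 n, Complex.exp ((t : ℂ) * I) ^ (n - k)
      = Complex.exp (((n : ℂ) * t) * I) *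
        (Complex.cos ((k : ℂ) * t) - Complex.sin ((k : ℂ) * t) * I) := by
    intro k hk
    have hkn : k ≤ n := (Finset.mem_Icc.mp hk).2
    rw [pow_exp, Nat.cast_sub hkn]
    have : Complex.cos ((k : ℂ) * t) - Complex.sin ((k : ℂ) * t) * I
        = Complex.cos (-((k : ℂ) * t)) + Complex.sin (-((k : ℂ) * t)) * I := by
      rw [Complex.cos_neg, Complex.sin_neg]; ring
    rw [this, ← Complex.exp_mul_I, ← Complex.exp_add]
    ring_nf
  simp only [Ptrig, eval_add, eval_mul, eval_C, eval_pow, eval_X, eval_finset_sum]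
  rw [mul_add, Finset.mul_sum]
  congr 1
  · rw [show (n : ℕ) = n + 0 from rfl, hA 0]
    push_cast
    simp [Complex.cos_zero, Complex.sin_zero]
    ring
  · refine Finset.sum_congr rfl fun k hk => ?_
    rw [hA k, hB k hk]
    have hI : (I : ℂ) * I = -1 := Complex.I_mul_I
    set A := Complex.exp (((n : ℂ) * t) * I)
    set c := Complex.cos ((k : ℂ) * t)
    set s := Complex.sin ((k : ℂ) * t)
    linear_combination (-(A * (b k : ℂ) * s)) * hI

lemma natDegree_Ptrig (n : ℕ) (a b : ℕ → ℝ) : (Ptrig n a b).natDegree ≤ 2 * n := by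
  refine (natDegree_add_le _ _).trans (max_le ?_ ?_)
  · exact (natDegree_C_mul_X_pow_le _ _).trans (by omega)
  · refine natDegree_sum_le_of_forall_le _ _ fun k hk => ?_
    have hkn : k ≤ n := (Finset.mem_Icc.mp hk).2
    refine (natDegree_add_le _ _).trans (max_le ?_ ?_)
    · exact (natDegree_C_mul_X_pow_le _ _).trans (by omega)
    · exact (natDegree_C_mul_X_pow_le _ _).trans (by omega)

lemma iteratedDeriv_ofReal (φ : ℝ → ℝ) (hφ : ContDiff ℝ ∞ φ) (j : ℕ) (x : ℝ) :
    iteratedDeriv j (fun t => ((φ t : ℂ))) x = ((iteratedDeriv j φ x : ℝ) : ℂ) := by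
  simp only [iteratedDeriv]
  rw [show (fun t => ((φ t : ℂ))) = (Complex.ofRealCLM ∘ φ) from rfl,
    Complex.ofRealCLM.iteratedFDeriv_comp_left (hφ.of_le (by exact_mod_cast le_top)).contDiffAt le_rfl]
  simp

lemma sum_count_le {t : Finset ℂ} {M : Multiset ℂ} :
    ∑ w ∈ t, M.count w ≤ Multiset.card M := by
  classical
  have h1 : ∑ w ∈ t, M.count w = ∑ w ∈ t ∩ M.toFinset, M.count w := by
    refine (Finset.sum_subset Finset.inter_subset_left fun w hw hw' => ?_).symm
    rw [Multiset.count_eq_zero]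
    intro hmem
    exact hw' (Finset.mem_inter.mpr ⟨hw, Multiset.mem_toFinset.mpr hmem⟩)
  rw [h1]
  calc ∑ w ∈ t ∩ M.toFinset, M.count w
      ≤ ∑ w ∈ M.toFinset, M.count w :=
        Finset.sum_le_sum_of_subset Finset.inter_subset_right
    _ = Multiset.card M := M.toFinset_sum_count_eq

end TrigAux

open TrigAux Polynomial Complex in
open scoped ContDiff in
theorem trig_poly_zeros_at_most (n : ℕ) (a b : ℕ → ℝ) (φ : ℝ → ℝ)
    (hφ : ∀ t, φ t = a 0 + ∑ k ∈ Finset.Icc 1 n,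
      (a k * Real.cos ((k:ℝ) * t) + b k * Real.sin ((k:ℝ) * t)))
    (hne : φ ≠ 0) :
    ZerosAtMost φ (2 * n) := by
  classical
  intro s m hs
  set P : ℂ[X] := Ptrig n a b with hPdef
  -- key identity
  have hkey : ∀ t : ℝ, P.eval (Complex.exp ((t : ℂ) * I))
      = Complex.exp (((n : ℂ) * t) * I) * ((φ t : ℂ)) := by
    intro t
    rw [hPdef, Ptrig_eval, hφ t]
    push_cast
    ring
  -- smoothness of φ
  have hφeq : φ = fun t => a 0 + ∑ k ∈ Finset.Icc 1 n,
      (a k * Real.cos ((k:ℝ) * t) + b k * Real.sin ((k:ℝ) * t)) := funext hφ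
  have hφs : ContDiff ℝ ∞ φ := by
    rw [hφeq]
    refine contDiff_const.add (ContDiff.sum fun k _ => ContDiff.add ?_ ?_)
    · exact contDiff_const.mul (Real.contDiff_cos.comp (contDiff_const.mul contDiff_id))
    · exact contDiff_const.mul (Real.contDiff_sin.comp (contDiff_const.mul contDiff_id))
  -- P ≠ 0
  have hP0 : P ≠ 0 := by
    intro h
    apply hne
    funext t
    have := hkey t
    rw [h] at this
    simp only [eval_zero] at this
    have := (mul_eq_zero.mp this.symm).resolve_left (Complex.exp_ne_zero _)
    exact_mod_cast congrArg Complex.re this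
  -- each zero of multiplicity m x gives root multiplicity ≥ m x
  have hmult : ∀ x ∈ s, m x ≤ P.rootMultiplicity (Complex.exp ((x : ℂ) * I)) := by
    intro x hx
    obtain ⟨hxIco, hmpos, hvan, hnz⟩ := hs x hx
    set w := Complex.exp ((x : ℂ) * I) with hw
    have hvanC : ∀ j < m x, iteratedDeriv j (fun t => ((φ t : ℂ))) x = 0 := by
      intro j hj
      rw [iteratedDeriv_ofReal φ hφs j x, hvan j hj]
      simp
    have hexp_smooth : ContDiff ℝ ∞ (fun t : ℝ => Complex.exp (((n : ℂ) * t) * I)) := by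
      apply Complex.contDiff_exp.comp
      apply ContDiff.mul _ contDiff_const
      exact contDiff_const.mul Complex.ofRealCLM.contDiff
    have hφC : ContDiff ℝ ∞ (fun t : ℝ => ((φ t : ℂ))) :=
      Complex.ofRealCLM.contDiff.comp hφs
    have hfvan : ∀ j < m x,
        iteratedDeriv j (fun t : ℝ => P.eval (Complex.exp ((t : ℂ) * I))) x = 0 := by
      intro j hj
      have heq : (fun t : ℝ => P.eval (Complex.exp ((t : ℂ) * I)))
          = fun t : ℝ => Complex.exp (((n : ℂ) * t) * I) * ((φ t : ℂ)) := funext hkey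
      rw [heq]
      exact vanish_mul x (m x) _ _ hφC hexp_smooth hvanC j hj
    have hDop : ∀ j < m x, ((Dop)^[j] P).eval w = 0 := by
      intro j hj
      rw [← iteratedDeriv_evalExp]
      exact hfvan j hj
    have hdvd : (X - C w) ^ (m x) ∣ P :=
      dvd_of_Dop_eval w (Complex.exp_ne_zero _) P (m x) hDop
    exact (Polynomial.le_rootMultiplicity_iff hP0).mpr hdvd
  -- injectivity of x ↦ exp(x I) on [0, 2π)
  have hinj : ∀ x ∈ s, ∀ y ∈ s,
      Complex.exp ((x : ℂ) * I) = Complex.exp ((y : ℂ) * I) → x = y := by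
    intro x hx y hy hxy
    obtain ⟨⟨hx0, hx2⟩, _, _, _⟩ := hs x hx
    obtain ⟨⟨hy0, hy2⟩, _, _, _⟩ := hs y hy
    obtain ⟨k, hk⟩ := Complex.exp_eq_exp_iff_exists_int.mp hxy
    have hπ := Real.pi_pos
    have hI : ((x : ℂ)) = (y : ℂ) + k * (2 * π) := by
      have := hk
      rw [show ((y:ℂ)) * I + (k : ℂ) * (2 * (π : ℂ) * I)
          = ((y : ℂ) + (k : ℂ) * (2 * (π:ℂ))) * I by ring] at this
      exact mul_right_cancel₀ Complex.I_ne_zero this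
    have hxr : x = y + k * (2 * π) := by exact_mod_cast hI
    have hk0 : k = 0 := by
      by_contra hk0
      rcases lt_or_gt_of_ne hk0 with h | h
      · have : (k : ℝ) ≤ -1 := by exact_mod_cast (by omega : k ≤ -1)
        nlinarith
      · have : (1 : ℝ) ≤ (k : ℝ) := by exact_mod_cast h
        nlinarith
    rw [hk0] at hxr
    simpa using hxr
  -- conclude
  calc ∑ x ∈ s, m x
      ≤ ∑ x ∈ s, P.rootMultiplicity (Complex.exp ((x : ℂ) * I)) :=
        Finset.sum_le_sum hmult
    _ = ∑ w ∈ s.image (fun x : ℝ => Complex.exp ((x : ℂ) * I)), P.rootMultiplicity w := by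
        rw [Finset.sum_image hinj]
    _ = ∑ w ∈ s.image (fun x : ℝ => Complex.exp ((x : ℂ) * I)), P.roots.count w := by
        refine Finset.sum_congr rfl fun w _ => ?_
        rw [Polynomial.count_roots]
    _ ≤ Multiset.card P.roots := sum_count_le
    _ ≤ P.natDegree := P.card_roots'
    _ ≤ 2 * n := natDegree_Ptrig n a b
end

section
/- Let u be a nonvanishing 2π-periodic C^{2n} function whose Fourier coefficients a_k = ∫_0^{2π} u(t) cos(kt) dt and b_k = ∫_0^{2π} u(t) sin(kt) dt vanish for all 0 ≤ k ≤ n. Then u has at least 2n+2 zeros in [0, 2π). -/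
open Real Set

noncomputable section
namespace ZVFC

def G (m : ℕ) : Set (ℝ → ℝ) :=
  {f | ∃ j : ℤ, j.natAbs ≤ m ∧ ((f = fun t => Real.cos (j * t)) ∨ (f = fun t => Real.sin (j * t)))}

def S (m : ℕ) : Submodule ℝ (ℝ → ℝ) := Submodule.span ℝ (G m)

lemma S_mono {m m' : ℕ} (h : m ≤ m') : S m ≤ S m' := by
  apply Submodule.span_mono
  rintro f ⟨j, hj, hf⟩
  exact ⟨j, hj.trans h, hf⟩

lemma cos_mem {m : ℕ} (j : ℤ) (h : j.natAbs ≤ m) : (fun t => Real.cos (j * t)) ∈ S m :=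
  Submodule.subset_span ⟨j, h, Or.inl rfl⟩

lemma sin_mem {m : ℕ} (j : ℤ) (h : j.natAbs ≤ m) : (fun t => Real.sin (j * t)) ∈ S m :=
  Submodule.subset_span ⟨j, h, Or.inr rfl⟩

lemma one_mem' {m : ℕ} : (fun _ : ℝ => (1:ℝ)) ∈ S m := by
  have := cos_mem (m := m) 0 (by simp)
  simpa using this

lemma mul_trig_mem {m : ℕ} (c0 c1 c2 : ℝ) {f : ℝ → ℝ} (hf : f ∈ S m) :
    (fun t => (c0 + c1 * Real.cos t + c2 * Real.sin t) * f t) ∈ S (m+1) := by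
  induction hf using Submodule.span_induction with
  | mem g hg =>
    obtain ⟨j, hj, hg | hg⟩ := hg <;> subst hg
    · have hrep : (fun t => (c0 + c1 * Real.cos t + c2 * Real.sin t) * Real.cos (j * t)) =
        c0 • (fun t => Real.cos ((j:ℤ) * t)) + (c1/2) • (fun t => Real.cos (((j+1 : ℤ)) * t))
          + (c1/2) • (fun t => Real.cos (((j-1 : ℤ)) * t))
          + (c2/2) • (fun t => Real.sin (((j+1 : ℤ)) * t))
          + (-(c2/2)) • (fun t => Real.sin (((j-1 : ℤ)) * t)) := by
        funext t
        simp only [Pi.add_apply, Pi.smul_apply, smul_eq_mul]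
        push_cast
        simp only [add_mul, sub_mul, one_mul, Real.cos_add, Real.cos_sub, Real.sin_add, Real.sin_sub]
        ring
      rw [hrep]
      refine Submodule.add_mem _ (Submodule.add_mem _ (Submodule.add_mem _ (Submodule.add_mem _
        (Submodule.smul_mem _ _ (cos_mem j (by omega)))
        (Submodule.smul_mem _ _ (cos_mem (j+1) (by omega))))
        (Submodule.smul_mem _ _ (cos_mem (j-1) (by omega))))
        (Submodule.smul_mem _ _ (sin_mem (j+1) (by omega))))
        (Submodule.smul_mem _ _ (sin_mem (j-1) (by omega)))
    · have hrep : (fun t => (c0 + c1 * Real.cos t + c2 * Real.sin t) * Real.sin (j * t)) =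
        c0 • (fun t => Real.sin ((j:ℤ) * t)) + (c1/2) • (fun t => Real.sin (((j+1 : ℤ)) * t))
          + (c1/2) • (fun t => Real.sin (((j-1 : ℤ)) * t))
          + (c2/2) • (fun t => Real.cos (((j-1 : ℤ)) * t))
          + (-(c2/2)) • (fun t => Real.cos (((j+1 : ℤ)) * t)) := by
        funext t
        simp only [Pi.add_apply, Pi.smul_apply, smul_eq_mul]
        push_cast
        simp only [add_mul, sub_mul, one_mul, Real.cos_add, Real.cos_sub, Real.sin_add, Real.sin_sub]
        ring
      rw [hrep]
      refine Submodule.add_mem _ (Submodule.add_mem _ (Submodule.add_mem _ (Submodule.add_mem _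
        (Submodule.smul_mem _ _ (sin_mem j (by omega)))
        (Submodule.smul_mem _ _ (sin_mem (j+1) (by omega))))
        (Submodule.smul_mem _ _ (sin_mem (j-1) (by omega))))
        (Submodule.smul_mem _ _ (cos_mem (j-1) (by omega))))
        (Submodule.smul_mem _ _ (cos_mem (j+1) (by omega)))
  | zero =>
    have : (fun t => (c0 + c1 * Real.cos t + c2 * Real.sin t) * (0 : ℝ → ℝ) t) = 0 := by
      funext t; simp
    rw [this]; exact Submodule.zero_mem _
  | add g h _ _ ihg ihh =>
    have : (fun t => (c0 + c1 * Real.cos t + c2 * Real.sin t) * (g + h) t) =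
        (fun t => (c0 + c1 * Real.cos t + c2 * Real.sin t) * g t)
        + (fun t => (c0 + c1 * Real.cos t + c2 * Real.sin t) * h t) := by
      funext t; simp [Pi.add_apply]; ring
    rw [this]; exact Submodule.add_mem _ ihg ihh
  | smul c g _ ih =>
    have : (fun t => (c0 + c1 * Real.cos t + c2 * Real.sin t) * (c • g) t) =
        c • (fun t => (c0 + c1 * Real.cos t + c2 * Real.sin t) * g t) := by
      funext t; simp [Pi.smul_apply, smul_eq_mul]; ring
    rw [this]; exact Submodule.smul_mem _ _ ih

lemma sinprod (a b t : ℝ) :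
    Real.sin ((t - a)/2) * Real.sin ((t - b)/2) =
      Real.cos ((a - b)/2)/2 + (-(Real.cos ((a+b)/2)/2)) * Real.cos t
        + (-(Real.sin ((a+b)/2)/2)) * Real.sin t := by
  have h1 : ∀ X Y : ℝ, Real.sin X * Real.sin Y = (Real.cos (X - Y) - Real.cos (X + Y))/2 := by
    intro X Y; rw [Real.cos_sub, Real.cos_add]; ring
  rw [h1]
  have e1 : (t - a)/2 - (t - b)/2 = (b - a)/2 := by ring
  have e2 : (t - a)/2 + (t - b)/2 = t - (a + b)/2 := by ring
  rw [e1, e2, Real.cos_sub]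
  have e3 : (b - a)/2 = -((a - b)/2) := by ring
  rw [e3, Real.cos_neg]
  ring

lemma prod_mem (w : ℕ → ℝ) : ∀ (m : ℕ) (s : Finset ℕ), s.card = 2 * m →
    (fun t => ∏ i ∈ s, Real.sin ((t - w i)/2)) ∈ S m := by
  intro m
  induction m with
  | zero =>
    intro s hs
    rw [Finset.card_eq_zero] at hs
    subst hs
    simpa using one_mem' (m := 0)
  | succ m ih =>
    intro s hs
    have h1 : s.Nonempty := by rw [← Finset.card_pos]; omega
    obtain ⟨a, ha⟩ := h1
    have h2 : (s.erase a).Nonempty := by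
      rw [← Finset.card_pos, Finset.card_erase_of_mem ha]; omega
    obtain ⟨b, hb⟩ := h2
    set s' := (s.erase a).erase b with hs'
    have hcard : s'.card = 2 * m := by
      rw [hs', Finset.card_erase_of_mem hb, Finset.card_erase_of_mem ha, hs]; omega
    have key := mul_trig_mem (Real.cos ((w a - w b)/2)/2) (-(Real.cos ((w a + w b)/2)/2))
      (-(Real.sin ((w a + w b)/2)/2)) (ih s' hcard)
    have heq : (fun t => ∏ i ∈ s, Real.sin ((t - w i)/2)) =
        (fun t => (Real.cos ((w a - w b)/2)/2 + (-(Real.cos ((w a + w b)/2)/2)) * Real.cos t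
          + (-(Real.sin ((w a + w b)/2)/2)) * Real.sin t) * ∏ i ∈ s', Real.sin ((t - w i)/2)) := by
      funext t
      rw [← Finset.mul_prod_erase _ _ ha, ← Finset.mul_prod_erase _ _ hb, ← mul_assoc,
        sinprod (w a) (w b) t]
    rw [heq]
    exact key

lemma integral_orth {n : ℕ} {u : ℝ → ℝ} (hc : Continuous u)
    (ha : ∀ k ≤ n, ∫ t in (0:ℝ)..(2*π), u t * Real.cos ((k:ℝ) * t) = 0)
    (hb : ∀ k ≤ n, ∫ t in (0:ℝ)..(2*π), u t * Real.sin ((k:ℝ) * t) = 0)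
    {f : ℝ → ℝ} (hf : f ∈ S n) :
    Continuous f ∧ ∫ t in (0:ℝ)..(2*π), u t * f t = 0 := by
  induction hf using Submodule.span_induction with
  | mem g hg =>
    obtain ⟨j, hj, hg | hg⟩ := hg <;> subst hg
    · refine ⟨by continuity, ?_⟩
      obtain ⟨k, hk, h⟩ : ∃ k : ℕ, k ≤ n ∧ ((j:ℝ) = (k:ℝ) ∨ (j:ℝ) = -(k:ℝ)) := by
        refine ⟨j.natAbs, hj, ?_⟩
        rcases Int.natAbs_eq j with h | h
        · left; rw [Nat.cast_natAbs, abs_of_nonneg (by omega : (0:ℤ) ≤ j)]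
        · right; rw [Nat.cast_natAbs, abs_of_nonpos (by omega : j ≤ (0:ℤ))]; push_cast; ring
      rcases h with h | h
      · simp only [h]; exact ha k hk
      · simp only [h, neg_mul, Real.cos_neg]; exact ha k hk
    · refine ⟨by continuity, ?_⟩
      obtain ⟨k, hk, h⟩ : ∃ k : ℕ, k ≤ n ∧ ((j:ℝ) = (k:ℝ) ∨ (j:ℝ) = -(k:ℝ)) := by
        refine ⟨j.natAbs, hj, ?_⟩
        rcases Int.natAbs_eq j with h | h
        · left; rw [Nat.cast_natAbs, abs_of_nonneg (by omega : (0:ℤ) ≤ j)]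
        · right; rw [Nat.cast_natAbs, abs_of_nonpos (by omega : j ≤ (0:ℤ))]; push_cast; ring
      rcases h with h | h
      · simp only [h]; exact hb k hk
      · simp only [h, neg_mul, Real.sin_neg, mul_neg]
        rw [intervalIntegral.integral_neg, hb k hk, neg_zero]
  | zero => exact ⟨continuous_zero, by simp⟩
  | add g h _ _ ihg ihh =>
    refine ⟨ihg.1.add ihh.1, ?_⟩
    have e : (fun t => u t * (g + h) t) = (fun t => u t * g t) + (fun t => u t * h t) := by
      funext t; simp [Pi.add_apply]; ring
    calc ∫ t in (0:ℝ)..(2*π), u t * (g + h) t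
        = ∫ t in (0:ℝ)..(2*π), (u t * g t + u t * h t) := by
          simp only [Pi.add_apply, mul_add]
      _ = (∫ t in (0:ℝ)..(2*π), u t * g t) + ∫ t in (0:ℝ)..(2*π), u t * h t := by
          exact intervalIntegral.integral_add ((hc.mul ihg.1).intervalIntegrable _ _)
            ((hc.mul ihh.1).intervalIntegrable _ _)
      _ = 0 := by rw [ihg.2, ihh.2, add_zero]
  | smul c g _ ih =>
    refine ⟨ih.1.const_smul c, ?_⟩
    calc ∫ t in (0:ℝ)..(2*π), u t * (c • g) t
        = ∫ t in (0:ℝ)..(2*π), c * (u t * g t) := by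
          simp only [Pi.smul_apply, smul_eq_mul]; congr 1; funext t; ring
      _ = c * ∫ t in (0:ℝ)..(2*π), u t * g t := intervalIntegral.integral_const_mul _ _
      _ = 0 := by rw [ih.2, mul_zero]


lemma sign_const {u : ℝ → ℝ} (hu : Continuous u) {a b x y : ℝ} (h : ∀ t ∈ Ioo a b, u t ≠ 0)
    (hx : x ∈ Ioo a b) (hy : y ∈ Ioo a b) : 0 < u x * u y := by
  rcases lt_trichotomy (u x * u y) 0 with hlt | heq | hgt
  · exfalso
    have h0 : (0:ℝ) ∈ uIcc (u x) (u y) := by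
      rcases mul_neg_iff.1 hlt with ⟨h1, h2⟩ | ⟨h1, h2⟩
      · exact Set.mem_uIcc.2 (Or.inr ⟨h2.le, h1.le⟩)
      · exact Set.mem_uIcc.2 (Or.inl ⟨h1.le, h2.le⟩)
    obtain ⟨z, hz, hz0⟩ := intermediate_value_uIcc (hu.continuousOn (s := uIcc x y)) h0
    have hz' : z ∈ Ioo a b := by
      rcases Set.mem_uIcc.1 hz with ⟨h1, h2⟩ | ⟨h1, h2⟩
      · exact ⟨lt_of_lt_of_le hx.1 h1, lt_of_le_of_lt h2 hy.2⟩
      · exact ⟨lt_of_lt_of_le hy.1 h1, lt_of_le_of_lt h2 hx.2⟩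
    exact h z hz' hz0
  · exfalso
    rcases mul_eq_zero.1 heq with h1 | h1
    · exact h x hx h1
    · exact h y hy h1
  · exact hgt

lemma prod_sign_helper (s : Finset ℕ) (P : ℕ → Prop) [DecidablePred P] :
    (∏ j ∈ s, (if P j then (-1:ℝ) else 1)) = (-1:ℝ)^((s.filter P).card) := by
  rw [Finset.prod_ite, Finset.prod_const, Finset.prod_const_one, mul_one]

lemma main_contra (n : ℕ) (u : ℝ → ℝ) (hc : Continuous u)
    (huper : Function.Periodic u (2*π))
    (ha : ∀ k ≤ n, ∫ t in (0:ℝ)..(2*π), u t * Real.cos ((k:ℝ) * t) = 0)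
    (hb : ∀ k ≤ n, ∫ t in (0:ℝ)..(2*π), u t * Real.sin ((k:ℝ) * t) = 0)
    (F : Finset ℝ) (hF : ∀ x, x ∈ F ↔ x ∈ Ico (0:ℝ) (2*π) ∧ u x = 0)
    (hcard : F.card ≤ 2*n+1) : False := by
  have hπ : (0:ℝ) < π := Real.pi_pos
  have hint0 : ∫ t in (0:ℝ)..(2*π), u t = 0 := by
    have h0 := ha 0 (Nat.zero_le n)
    simpa using h0
  rcases Nat.eq_zero_or_pos F.card with hr0 | hr
  · -- no zeros at all in [0, 2π)
    rw [Finset.card_eq_zero] at hr0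
    have hne : ∀ t ∈ Ioo (0:ℝ) (2*π), u t ≠ 0 := by
      intro t ht h0
      have : t ∈ F := (hF t).2 ⟨⟨ht.1.le, ht.2⟩, h0⟩
      simp [hr0] at this
    have hπmem : π ∈ Ioo (0:ℝ) (2*π) := ⟨hπ, by linarith⟩
    have hpos : 0 < ∫ t in (0:ℝ)..(2*π), u π * u t := by
      apply intervalIntegral.intervalIntegral_pos_of_pos_on
        ((continuous_const.mul hc).intervalIntegrable _ _)
        (fun t ht => sign_const hc hne hπmem ht) (by linarith)
    rw [intervalIntegral.integral_const_mul, hint0, mul_zero] at hpos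
    exact lt_irrefl _ hpos
  · set r := F.card with hrdef
    obtain ⟨z, hzdef⟩ : ∃ z : Fin r → ℝ, ∀ i, z i = (F.orderIsoOfFin rfl i : ℝ) :=
      ⟨_, fun _ => rfl⟩
    have hz_mono : StrictMono z := by
      intro i j hij
      rw [hzdef, hzdef]
      exact (Finset.orderIsoOfFin F rfl).lt_iff_lt.2 hij
    have hz_mem : ∀ i, z i ∈ Ico (0:ℝ) (2*π) ∧ u (z i) = 0 := by
      intro i
      rw [hzdef]
      exact (hF _).1 (F.orderIsoOfFin rfl i).2
    have hz_surj : ∀ x ∈ F, ∃ i, z i = x := by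
      intro x hx
      refine ⟨(F.orderIsoOfFin rfl).symm ⟨x, hx⟩, ?_⟩
      rw [hzdef]
      show ((F.orderIsoOfFin rfl) ((F.orderIsoOfFin rfl).symm ⟨x, hx⟩) : ℝ) = x
      rw [OrderIso.apply_symm_apply]
    obtain ⟨zz, hzzdef⟩ : ∃ zz : ℕ → ℝ,
        ∀ i, zz i = z ⟨i % r, Nat.mod_lt i hr⟩ + 2*π*((i / r : ℕ) : ℝ) :=
      ⟨_, fun _ => rfl⟩
    have hzz_lt : ∀ i, ∀ hi : i < r, zz i = z ⟨i, hi⟩ := by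
      intro i hi
      have h1 : (⟨i % r, Nat.mod_lt i hr⟩ : Fin r) = ⟨i, hi⟩ := by
        apply Fin.ext
        simpa using Nat.mod_eq_of_lt hi
      rw [hzzdef, h1, Nat.div_eq_of_lt hi]
      simp
    have hzz_shift : ∀ i, zz (i + r) = zz i + 2*π := by
      intro i
      have h1 : (⟨(i + r) % r, Nat.mod_lt _ hr⟩ : Fin r) = ⟨i % r, Nat.mod_lt i hr⟩ := by
        apply Fin.ext
        simpa using Nat.add_mod_right i r
      rw [hzzdef, hzzdef, h1, Nat.add_div_right _ hr]
      push_cast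
      ring
    have hzz_succ : ∀ i, zz i < zz (i + 1) := by
      intro i
      have hmod : i % r < r := Nat.mod_lt i hr
      have hkey : i + 1 = (i % r + 1) + (i / r) * r := by
        have h := Nat.div_add_mod i r
        rw [Nat.mul_comm] at h
        omega
      rcases lt_or_eq_of_le (Nat.succ_le_of_lt hmod) with hlt | heq
      all_goals (have heq' : i % r + 1 ≤ r := Nat.succ_le_of_lt hmod)
      · -- i % r + 1 < r
        have hm1 : (i+1) % r = i % r + 1 := by
          rw [hkey, Nat.add_mul_mod_self_right, Nat.mod_eq_of_lt hlt]
        have hd1 : (i+1) / r = i / r := by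
          rw [hkey, Nat.add_mul_div_right _ _ hr, Nat.div_eq_of_lt hlt, zero_add]
        rw [hzzdef, hzzdef, hd1]
        have : z ⟨i % r, hmod⟩ < z ⟨(i+1) % r, Nat.mod_lt _ hr⟩ := by
          apply hz_mono
          simp [Fin.lt_def, hm1]
        have h2 : z ⟨i % r, Nat.mod_lt i hr⟩ < z ⟨(i+1) % r, Nat.mod_lt _ hr⟩ := this
        linarith
      · -- i % r + 1 = r, wraparound
        have heq2 : i % r + 1 = r := heq
        have hm1 : (i+1) % r = 0 := by
          rw [hkey, Nat.add_mul_mod_self_right, heq2, Nat.mod_self]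
        have hd1 : (i+1) / r = i / r + 1 := by
          rw [hkey, Nat.add_mul_div_right _ _ hr, heq2, Nat.div_self hr]
          omega
        rw [hzzdef, hzzdef, hd1]
        have h1 : z ⟨i % r, Nat.mod_lt i hr⟩ < 2*π := (hz_mem _).1.2
        have h2 : (0:ℝ) ≤ z ⟨(i+1) % r, Nat.mod_lt _ hr⟩ := (hz_mem _).1.1
        push_cast
        linarith
    have hzz_mono : StrictMono zz := strictMono_nat_of_lt_succ hzz_succ
    have hzzr : zz r = zz 0 + 2*π := by
      have := hzz_shift 0
      simpa using this
    have hzz0 : zz 0 ∈ Ico (0:ℝ) (2*π) := by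
      rw [hzz_lt 0 hr]
      exact (hz_mem _).1
    -- no zeros inside arcs
    have harcs : ∀ i < r, ∀ t ∈ Ioo (zz i) (zz (i+1)), u t ≠ 0 := by
      intro i hi t ht h0
      have hlb : zz 0 ≤ zz i := hzz_mono.monotone (Nat.zero_le i)
      have hub : zz (i+1) ≤ zz r := hzz_mono.monotone (by omega)
      have ht0 : 0 ≤ t := le_trans hzz0.1 (le_trans hlb ht.1.le)
      rcases lt_or_ge t (2*π) with ht2 | ht2
      · have htF : t ∈ F := (hF t).2 ⟨⟨ht0, ht2⟩, h0⟩
        obtain ⟨j, hj⟩ := hz_surj t htF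
        rcases lt_or_eq_of_le (Nat.succ_le_of_lt hi) with hi1 | hi1
        · -- i+1 < r
          have l1 : z ⟨i, hi⟩ < z j := by rw [hj, ← hzz_lt i hi]; exact ht.1
          have l2 : z j < z ⟨i+1, hi1⟩ := by rw [hj, ← hzz_lt (i+1) hi1]; exact ht.2
          have hl1 : i < (j : ℕ) := by simpa [Fin.lt_def] using hz_mono.lt_iff_lt.1 l1
          have hl2 : (j : ℕ) < i + 1 := by simpa [Fin.lt_def] using hz_mono.lt_iff_lt.1 l2
          omega
        · -- i+1 = r : t > zz i = z (r-1), so j > r-1, impossible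
          have l1 : z ⟨i, hi⟩ < z j := by rw [hj, ← hzz_lt i hi]; exact ht.1
          have hji : i < (j : ℕ) := by simpa [Fin.lt_def] using hz_mono.lt_iff_lt.1 l1
          have : (j : ℕ) < r := j.2
          omega
      · -- t ≥ 2π : shift down
        have ht' : t - 2*π < zz 0 := by
          have : t < zz r := lt_of_lt_of_le ht.2 hub
          rw [hzzr] at this
          linarith
        have hu' : u (t - 2*π) = 0 := by
          have h2 := huper (t - 2*π)
          simp only [sub_add_cancel] at h2
          rw [← h2]
          exact h0
        have htF : t - 2*π ∈ F := (hF _).2 ⟨⟨by linarith, by linarith [hzz0.2]⟩, hu'⟩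
        obtain ⟨j, hj⟩ := hz_surj _ htF
        have hge : zz 0 ≤ z j := by
          rw [hzz_lt 0 hr]
          exact hz_mono.monotone (by simp [Fin.le_def])
        rw [hj] at hge
        linarith
    -- sign on each arc
    obtain ⟨σ, hσdef⟩ : ∃ σ : ℕ → ℝ,
        ∀ i, σ i = if 0 < u ((zz i + zz (i+1))/2) then 1 else -1 := ⟨_, fun _ => rfl⟩
    have hσ_pm : ∀ i, σ i = 1 ∨ σ i = -1 := by
      intro i
      rw [hσdef]
      by_cases h : 0 < u ((zz i + zz (i+1))/2)
      · left; simp [h]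
      · right; simp [h]
    have hσ_sq : ∀ i, σ i * σ i = 1 := by
      intro i
      rcases hσ_pm i with h | h <;> rw [h] <;> norm_num
    have hmid_mem : ∀ i, (zz i + zz (i+1))/2 ∈ Ioo (zz i) (zz (i+1)) := by
      intro i
      have h := hzz_succ i
      rw [Set.mem_Ioo]
      constructor <;> linarith
    have hσ_sign : ∀ i < r, ∀ t ∈ Ioo (zz i) (zz (i+1)), 0 < σ i * u t := by
      intro i hi t ht
      have h1 : 0 < u ((zz i + zz (i+1))/2) * u t := sign_const hc (harcs i hi) (hmid_mem i) ht
      by_cases h0 : 0 < u ((zz i + zz (i+1))/2)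
      · have hut : 0 < u t := by
          rcases mul_pos_iff.1 h1 with ⟨_, h⟩ | ⟨h, _⟩
          · exact h
          · linarith
        rw [hσdef, if_pos h0]
        linarith
      · have hneg : u ((zz i + zz (i+1))/2) < 0 :=
          lt_of_le_of_ne (not_lt.1 h0) (harcs i hi _ (hmid_mem i))
        have hut : u t < 0 := by
          rcases mul_pos_iff.1 h1 with ⟨h, _⟩ | ⟨_, h⟩
          · linarith
          · exact h
        rw [hσdef, if_neg h0]
        linarith
    have hσ_per : σ r = σ 0 := by
      have e1 : zz (r+1) = zz 1 + 2*π := by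
        have := hzz_shift 1
        rw [add_comm 1 r] at this
        exact this
      have e2 : (zz r + zz (r+1))/2 = (zz 0 + zz 1)/2 + 2*π := by
        rw [hzzr, e1]; ring
      have e3 : u ((zz r + zz (r+1))/2) = u ((zz 0 + zz 1)/2) := by
        rw [e2]
        exact huper _
      rw [hσdef, hσdef, e3]
    classical
    obtain ⟨C, hCdef⟩ : ∃ C : Finset ℕ, C = (Finset.range r).filter (fun i => σ i ≠ σ (i+1)) :=
      ⟨_, rfl⟩
    have hC_even : Even C.card := by
      have htel : ∀ k, (∏ i ∈ Finset.range k, (σ i * σ (i+1))) = σ 0 * σ k := by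
        intro k
        induction k with
        | zero => simpa using (hσ_sq 0).symm
        | succ k ihk =>
          rw [Finset.prod_range_succ, ihk]
          calc σ 0 * σ k * (σ k * σ (k+1)) = σ 0 * (σ k * σ k) * σ (k+1) := by ring
            _ = σ 0 * σ (k+1) := by rw [hσ_sq k]; ring
      have h1 : (∏ i ∈ Finset.range r, (σ i * σ (i+1))) = 1 := by
        rw [htel r, hσ_per, hσ_sq 0]
      have h2 : (∏ i ∈ Finset.range r, (σ i * σ (i+1))) = (-1:ℝ)^C.card := by
        rw [hCdef, ← prod_sign_helper (Finset.range r) (fun i => σ i ≠ σ (i+1))]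
        apply Finset.prod_congr rfl
        intro i _
        by_cases hcc : σ i = σ (i+1)
        · rw [if_neg (by simpa using hcc), hcc, hσ_sq (i+1)]
        · rw [if_pos hcc]
          rcases hσ_pm i with hpi | hpi <;> rcases hσ_pm (i+1) with hpj | hpj <;>
            rw [hpi, hpj] at hcc ⊢ <;> norm_num at hcc <;> norm_num
      rw [h1] at h2
      exact (neg_one_pow_eq_one_iff_even (by norm_num : (-1:ℝ) ≠ 1)).1 h2.symm
    obtain ⟨m, hm⟩ := hC_even
    have hmn : m ≤ n := by
      have hCle : C.card ≤ r := by
        rw [hCdef]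
        exact le_trans (Finset.card_filter_le _ _) (by simp)
      omega
    obtain ⟨p, hpdef⟩ : ∃ p : ℝ → ℝ, p = fun t => ∏ i ∈ C, Real.sin ((t - zz (i+1))/2) :=
      ⟨_, rfl⟩
    have hp_mem : p ∈ S m := by rw [hpdef]; exact prod_mem (fun i => zz (i+1)) m C (by omega)
    have horth := integral_orth hc ha hb (S_mono hmn hp_mem)
    have hp_cont : Continuous p := horth.1
    have hp_int : ∫ t in (0:ℝ)..(2*π), u t * p t = 0 := horth.2
    -- p is periodic
    have hp_per : Function.Periodic p (2*π) := by
      intro t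
      rw [hpdef]
      show (∏ i ∈ C, Real.sin ((t + 2*π - zz (i+1))/2)) = ∏ i ∈ C, Real.sin ((t - zz (i+1))/2)
      have e : ∀ i, Real.sin ((t + 2*π - zz (i+1))/2) = -Real.sin ((t - zz (i+1))/2) := by
        intro i
        have : (t + 2*π - zz (i+1))/2 = (t - zz (i+1))/2 + π := by ring
        rw [this, Real.sin_add_pi]
      calc (∏ i ∈ C, Real.sin ((t + 2*π - zz (i+1))/2))
          = ∏ i ∈ C, (-1) * Real.sin ((t - zz (i+1))/2) := by
            apply Finset.prod_congr rfl; intro i _; rw [e i]; ring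
        _ = (-1:ℝ)^C.card * ∏ i ∈ C, Real.sin ((t - zz (i+1))/2) := by
            rw [Finset.prod_mul_distrib, Finset.prod_const]
        _ = ∏ i ∈ C, Real.sin ((t - zz (i+1))/2) := by
            rw [hm, Even.neg_one_pow ⟨m, rfl⟩, one_mul]
    -- sign of p on each arc
    have hp_sign : ∀ i < r, ∀ t ∈ Ioo (zz i) (zz (i+1)),
        0 < (-1:ℝ)^((C.filter fun j => i ≤ j).card) * p t := by
      intro i hi t ht
      have key : ∀ j ∈ C, 0 < (if i ≤ j then (-1:ℝ) else 1) * Real.sin ((t - zz (j+1))/2) := by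
        intro j hj
        have hjr : j < r := by
          have h' := hj
          rw [hCdef] at h'
          exact Finset.mem_range.1 (Finset.mem_filter.1 h').1
        have hlb : zz 0 ≤ zz i := hzz_mono.monotone (Nat.zero_le i)
        have hub : zz (i+1) ≤ zz r := hzz_mono.monotone (by omega)
        by_cases hij : i ≤ j
        · have h1 : t < zz (j+1) := lt_of_lt_of_le ht.2 (hzz_mono.monotone (by omega))
          have h2 : zz (j+1) ≤ zz r := hzz_mono.monotone (by omega)
          have h3 : zz 0 < t := lt_of_le_of_lt hlb ht.1
          have hs : Real.sin ((t - zz (j+1))/2) < 0 := by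
            apply Real.sin_neg_of_neg_of_neg_pi_lt
            · have : t - zz (j+1) < 0 := by linarith
              linarith
            · have : -(2*π) < t - zz (j+1) := by rw [hzzr] at h2; linarith
              linarith
          rw [if_pos hij]
          linarith
        · have hji : j + 1 ≤ i := by omega
          have h1 : zz (j+1) ≤ zz i := hzz_mono.monotone hji
          have h2 : zz 0 ≤ zz (j+1) := hzz_mono.monotone (by omega)
          have h3 : t < zz 0 + 2*π := by rw [← hzzr]; exact lt_of_lt_of_le ht.2 hub
          have hs : 0 < Real.sin ((t - zz (j+1))/2) := by
            apply Real.sin_pos_of_pos_of_lt_pi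
            · have : 0 < t - zz (j+1) := by linarith [ht.1]
              linarith
            · have : t - zz (j+1) < 2*π := by linarith
              linarith
          rw [if_neg hij]
          linarith
      have hprod := Finset.prod_pos key
      rw [Finset.prod_mul_distrib, prod_sign_helper] at hprod
      simpa only [hpdef] using hprod
    -- sigma formula
    have hσ_formula : ∀ i, i ≤ r → σ i = σ 0 * (-1:ℝ)^((C.filter fun j => j < i).card) := by
      intro i
      induction i with
      | zero =>
        intro _
        rw [Finset.filter_false_of_mem (fun j _ => Nat.not_lt_zero j)]
        simp
      | succ i ih =>
        intro hi1
        have hi : i < r := hi1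
        have hdc : (C.filter fun j => j < i+1).card =
            (C.filter fun j => j < i).card + (if i ∈ C then 1 else 0) := by
          have he : (C.filter fun j => j < i+1) =
              (C.filter fun j => j < i) ∪ (C.filter fun j => j = i) := by
            rw [← Finset.filter_or]
            apply Finset.filter_congr
            intro j _
            simp [Nat.lt_succ_iff_lt_or_eq]
            exact Nat.le_iff_lt_or_eq
          rw [he, Finset.card_union_of_disjoint, Finset.filter_eq']
          · split <;> simp
          · rw [Finset.disjoint_left]
            intro a haa hab
            have h1 := (Finset.mem_filter.1 haa).2
            have h2 := (Finset.mem_filter.1 hab).2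
            omega
        by_cases hiC : i ∈ C
        · have hne : σ i ≠ σ (i+1) := by
            have h' := hiC
            rw [hCdef] at h'
            exact (Finset.mem_filter.1 h').2
          have hflip : σ (i+1) = -σ i := by
            rcases hσ_pm i with h1 | h1 <;> rcases hσ_pm (i+1) with h2 | h2 <;>
              rw [h1, h2] at hne ⊢ <;> norm_num at hne <;> norm_num
          rw [hflip, ih (by omega), hdc, if_pos hiC, pow_add]
          ring
        · have hee : σ (i+1) = σ i := by
            by_contra hne
            exact hiC (hCdef ▸ Finset.mem_filter.2 ⟨Finset.mem_range.2 hi, fun h => hne h.symm⟩)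
          rw [hee, ih (by omega), hdc, if_neg hiC, Nat.add_zero]
    -- global sign
    have hf_sign : ∀ i < r, ∀ t ∈ Ioo (zz i) (zz (i+1)), 0 < σ 0 * (u t * p t) := by
      intro i hi t ht
      have h1 := hσ_sign i hi t ht
      have h2 := hp_sign i hi t ht
      have h3 := mul_pos h1 h2
      have hsplit : (C.filter fun j => j < i).card + (C.filter fun j => i ≤ j).card = C.card := by
        have := Finset.card_filter_add_card_filter_not (s := C) (p := fun j => j < i)
        simpa [not_lt] using this
      have h4 : σ i * (-1:ℝ)^((C.filter fun j => i ≤ j).card) = σ 0 := by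
        rw [hσ_formula i (le_of_lt hi), mul_assoc, ← pow_add, hsplit, hm,
          Even.neg_one_pow ⟨m, rfl⟩, mul_one]
      calc (0:ℝ) < (σ i * u t) * ((-1:ℝ)^((C.filter fun j => i ≤ j).card) * p t) := h3
        _ = (σ i * (-1:ℝ)^((C.filter fun j => i ≤ j).card)) * (u t * p t) := by ring
        _ = σ 0 * (u t * p t) := by rw [h4]
    -- integral positivity
    have hf_cont : Continuous (fun t => σ 0 * (u t * p t)) := continuous_const.mul (hc.mul hp_cont)
    have hint_arcs : ∀ i ∈ Finset.range r,
        0 < ∫ t in (zz i)..(zz (i+1)), σ 0 * (u t * p t) := by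
      intro i hi
      apply intervalIntegral.intervalIntegral_pos_of_pos_on
        (hf_cont.intervalIntegrable _ _)
        (fun t ht => hf_sign i (Finset.mem_range.1 hi) t ht) (hzz_succ i)
    have hsum : (∑ i ∈ Finset.range r, ∫ t in (zz i)..(zz (i+1)), σ 0 * (u t * p t))
        = ∫ t in (zz 0)..(zz r), σ 0 * (u t * p t) :=
      intervalIntegral.sum_integral_adjacent_intervals
        (fun i _ => hf_cont.intervalIntegrable _ _)
    have hpos_total : 0 < ∫ t in (zz 0)..(zz r), σ 0 * (u t * p t) := by
      rw [← hsum]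
      exact Finset.sum_pos hint_arcs ⟨0, Finset.mem_range.2 hr⟩
    have hzero_total : ∫ t in (zz 0)..(zz r), σ 0 * (u t * p t) = 0 := by
      have hup_per : Function.Periodic (fun t => u t * p t) (2*π) := by
        intro t
        show u (t + 2*π) * p (t + 2*π) = u t * p t
        rw [huper t, hp_per t]
      have e1 : ∫ t in (zz 0)..(zz r), σ 0 * (u t * p t)
          = σ 0 * ∫ t in (zz 0)..(zz r), u t * p t := intervalIntegral.integral_const_mul _ _
      have e2 : (∫ t in (zz 0)..(zz r), u t * p t) = ∫ t in (0:ℝ)..(0 + 2*π), u t * p t := by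
        rw [hzzr]
        exact hup_per.intervalIntegral_add_eq (zz 0) 0
      rw [e1, e2, zero_add, hp_int, mul_zero]
    rw [hzero_total] at hpos_total
    exact lt_irrefl _ hpos_total


end ZVFC
end

theorem zeros_of_vanishing_fourier_coefficients (n : ℕ) (u : ℝ → ℝ) (hune : u ≠ 0)
    (huper : Function.Periodic u (2*π)) (hu : ContDiff ℝ (2*n : ℕ) u)
    (ha : ∀ k ≤ n, ∫ t in (0:ℝ)..(2*π), u t * Real.cos ((k:ℝ) * t) = 0)
    (hb : ∀ k ≤ n, ∫ t in (0:ℝ)..(2*π), u t * Real.sin ((k:ℝ) * t) = 0) :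
    ∃ s : Finset ℝ, s.card = 2*n+2 ∧ ∀ x ∈ s, x ∈ Set.Ico (0:ℝ) (2*π) ∧ u x = 0 := by
  have hc : Continuous u := hu.continuous
  by_cases hinf : {x : ℝ | x ∈ Set.Ico (0:ℝ) (2*π) ∧ u x = 0}.Infinite
  · obtain ⟨s, hsub, hcard⟩ := hinf.exists_subset_card_eq (2*n+2)
    exact ⟨s, hcard, fun x hx => hsub hx⟩
  · have hfin := Set.not_infinite.mp hinf
    by_cases hbig : 2*n+2 ≤ hfin.toFinset.card
    · obtain ⟨s, hsub, hcard⟩ := Finset.exists_subset_card_eq hbig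
      refine ⟨s, hcard, fun x hx => ?_⟩
      have hx2 := hsub hx
      rw [Set.Finite.mem_toFinset] at hx2
      exact hx2
    · exfalso
      refine ZVFC.main_contra n u hc huper ha hb hfin.toFinset ?_ (by omega)
      intro x
      rw [Set.Finite.mem_toFinset]
      exact Iff.rfl
end

section
/- Let A be a Chebyshev space of order 2n+1 of 2π-periodic functions and let u be 2π-periodic and C^{2n}. If φ is the minimal function of u with respect to (p_1, ..., p_n) (the infimum of the one-parameter family of functions in A agreeing with u to order 2μ_i at each p_i and lying above u), then φ − u has total zero multiplicity at least 2n+2; in particular φ − u has at least one zero besides the points p_1, ..., p_n, or vanishes to higher order than 2μ_i at some p_i. -/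
open Real Set

lemma periodic_iteratedDeriv {f : ℝ → ℝ} {c : ℝ} (h : Function.Periodic f c) (k : ℕ) :
    Function.Periodic (iteratedDeriv k f) c := by
  intro x
  have h2 : (fun z => f (z + c)) = f := funext h
  calc iteratedDeriv k f (x + c) = iteratedDeriv k (fun z => f (z + c)) x := by
        rw [iteratedDeriv_comp_add_const]
    _ = iteratedDeriv k f x := by rw [h2]

lemma idW_eq {f : ℝ → ℝ} {M k : ℕ} (hf : ContDiff ℝ M f) (hk : k ≤ M) {s : Set ℝ}
    (hs : UniqueDiffOn ℝ s) {x : ℝ} (hx : x ∈ s) :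
    iteratedDerivWithin k f s x = iteratedDeriv k f x := by
  have h : HasFTaylorSeriesUpTo (M : ℕ∞) f (ftaylorSeries ℝ f) :=
    contDiff_iff_ftaylorSeries.mp hf
  have h2 : HasFTaylorSeriesUpToOn (M : ℕ∞) f (ftaylorSeries ℝ f) s :=
    (hasFTaylorSeriesUpToOn_univ_iff.mpr h).mono (subset_univ s)
  have h3 := h2.eq_iteratedFDerivWithin_of_uniqueDiffOn (by exact_mod_cast hk) hs hx
  rw [iteratedDerivWithin_eq_iteratedFDerivWithin, iteratedDeriv_eq_iteratedFDeriv, ← h3]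
  rfl

lemma lagrange_right {f : ℝ → ℝ} {m : ℕ} (hm : 0 < m) (hf : ContDiff ℝ m f) {x₀ : ℝ}
    (hvan : ∀ j < m, iteratedDeriv j f x₀ = 0) {t : ℝ} (ht : x₀ < t) :
    ∃ ξ ∈ Ioo x₀ t, f t = iteratedDeriv m f ξ * (t - x₀) ^ m / m.factorial := by
  obtain ⟨k, rfl⟩ : ∃ k, m = k + 1 := ⟨m - 1, (Nat.succ_pred_eq_of_pos hm).symm⟩
  have hud : UniqueDiffOn ℝ (Icc x₀ t) := uniqueDiffOn_Icc ht
  have hfk : ContDiffOn ℝ k f (Icc x₀ t) :=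
    (hf.of_le (by exact_mod_cast Nat.le_succ k)).contDiffOn
  have hdiff : DifferentiableOn ℝ (iteratedDerivWithin k f (Icc x₀ t)) (Ioo x₀ t) := by
    have hD : DifferentiableOn ℝ (iteratedDeriv k f) (Ioo x₀ t) :=
      (hf.differentiable_iteratedDeriv k (by exact_mod_cast Nat.lt_succ_self k)).differentiableOn
    refine hD.congr fun y hy => ?_
    exact idW_eq hf (Nat.le_succ k) hud (Ioo_subset_Icc_self hy)
  obtain ⟨ξ, hξ, hL⟩ := taylor_mean_remainder_lagrange ht.ne (by rwa [uIcc_of_le ht.le])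
    (by rwa [uIcc_of_le ht.le, uIoo_of_lt ht])
  rw [uIoo_of_lt ht] at hξ; rw [uIcc_of_le ht.le] at hL
  refine ⟨ξ, hξ, ?_⟩
  have htay : taylorWithinEval f k (Icc x₀ t) x₀ t = 0 := by
    rw [taylor_within_apply]
    apply Finset.sum_eq_zero
    intro j hj
    rw [Finset.mem_range] at hj
    rw [idW_eq hf (by omega) hud (left_mem_Icc.mpr ht.le), hvan j (by omega), smul_zero]
  rw [htay, sub_zero] at hL
  rw [hL, idW_eq hf le_rfl hud (Ioo_subset_Icc_self hξ)]

lemma lagrange {f : ℝ → ℝ} {m : ℕ} (hm : 0 < m) (hf : ContDiff ℝ m f) {x₀ t : ℝ}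
    (hvan : ∀ j < m, iteratedDeriv j f x₀ = 0) (ht : t ≠ x₀) :
    ∃ ξ, ξ ∈ Ioo (min t x₀) (max t x₀) ∧
      f t = iteratedDeriv m f ξ * (t - x₀) ^ m / m.factorial := by
  rcases lt_or_gt_of_ne ht with h | h
  · -- t < x₀ : use the reflected function
    set g : ℝ → ℝ := fun s => f (-s) with hg
    have hgC : ContDiff ℝ m g := hf.comp contDiff_neg
    have hgvan : ∀ j < m, iteratedDeriv j g (-x₀) = 0 := by
      intro j hj
      rw [iteratedDeriv_comp_neg, neg_neg, hvan j hj, smul_zero]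
    obtain ⟨ξ', hξ', hL⟩ := lagrange_right hm hgC hgvan (t := -t) (by linarith)
    refine ⟨-ξ', ?_, ?_⟩
    · rcases hξ' with ⟨h1, h2⟩
      constructor
      · rw [min_eq_left h.le]; linarith
      · rw [max_eq_right h.le]; linarith
    · have h1 : g (-t) = f t := by simp [hg]
      have h2 : iteratedDeriv m g ξ' = (-1 : ℝ) ^ m • iteratedDeriv m f (-ξ') :=
        iteratedDeriv_comp_neg m f ξ'
      rw [h1, h2] at hL
      have h3 : (-t - -x₀) ^ m = (-1 : ℝ) ^ m * (t - x₀) ^ m := by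
        rw [← neg_pow]; ring_nf
      have hsq : (-1 : ℝ) ^ m * (-1 : ℝ) ^ m = 1 := by
        rw [← pow_add]; exact Even.neg_one_pow ⟨m, rfl⟩
      rw [hL, h3, smul_eq_mul]
      calc (-1 : ℝ) ^ m * iteratedDeriv m f (-ξ') * ((-1 : ℝ) ^ m * (t - x₀) ^ m) / m.factorial
          = ((-1 : ℝ) ^ m * (-1 : ℝ) ^ m) * (iteratedDeriv m f (-ξ') * (t - x₀) ^ m) /
            m.factorial := by ring
        _ = iteratedDeriv m f (-ξ') * (t - x₀) ^ m / m.factorial := by rw [hsq, one_mul]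
  · obtain ⟨ξ, hξ, hL⟩ := lagrange_right hm hf hvan h
    refine ⟨ξ, ?_, hL⟩
    rcases hξ with ⟨h1, h2⟩
    exact ⟨by rw [min_eq_right h.le]; linarith, by rw [max_eq_left h.le]; linarith⟩

section
variable {f : ℝ → ℝ} {M m : ℕ} {x : ℝ}

lemma xi_bound {t x ξ δ : ℝ} (hξ : ξ ∈ Ioo (min t x) (max t x)) (htd : |t - x| < δ) :
    |ξ - x| < δ := by
  obtain ⟨h1, h2⟩ := hξ
  rw [abs_lt] at htd ⊢
  rcases le_total t x with h | h
  · rw [min_eq_left h] at h1; rw [max_eq_right h] at h2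
    constructor <;> linarith [htd.1, htd.2]
  · rw [min_eq_right h] at h1; rw [max_eq_left h] at h2
    constructor <;> linarith [htd.1, htd.2]

lemma cont_near (hf : ContDiff ℝ M f) (hmM : m ≤ M) {ε : ℝ} (hε : 0 < ε) :
    ∃ δ > 0, ∀ y, |y - x| < δ → |iteratedDeriv m f y - iteratedDeriv m f x| < ε := by
  have hc : Continuous (iteratedDeriv m f) :=
    hf.continuous_iteratedDeriv m (by exact_mod_cast hmM)
  obtain ⟨δ, hδ, h⟩ := Metric.continuousAt_iff.mp hc.continuousAt ε hε
  exact ⟨δ, hδ, fun y hy => by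
    have := h (show dist y x < δ by rwa [Real.dist_eq]); rwa [Real.dist_eq] at this⟩

lemma L_sign (hf : ContDiff ℝ M f) (hpos : ∀ t, 0 ≤ f t) (hm : 0 < m) (hmM : m ≤ M)
    (hvan : ∀ j < m, iteratedDeriv j f x = 0) (hne : iteratedDeriv m f x ≠ 0) :
    Even m ∧ 0 < iteratedDeriv m f x := by
  set a := iteratedDeriv m f x with ha
  have hfm : ContDiff ℝ m f := hf.of_le (by exact_mod_cast hmM)
  obtain ⟨δ, hδ, hnear⟩ := cont_near (x := x) hf hmM (half_pos (abs_pos.mpr hne))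
  -- right side: a > 0
  have hapos : 0 < a := by
    rcases hne.lt_or_gt with hneg | hpos'
    · exfalso
      obtain ⟨ξ, hξ, hL⟩ := lagrange hm hfm hvan (t := x + δ / 2) (ne_of_gt (by linarith))
      have hmin : min (x + δ / 2) x = x := min_eq_right (by linarith)
      have hmax : max (x + δ / 2) x = x + δ / 2 := max_eq_left (by linarith)
      rw [hmin, hmax] at hξ
      have hξd : |ξ - x| < δ := by
        rcases hξ with ⟨h1, h2⟩; rw [abs_lt]; constructor <;> linarith
      have h1 : iteratedDeriv m f ξ < 0 := by
        have := hnear ξ hξd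
        rw [abs_lt] at this
        have : iteratedDeriv m f ξ < a + |a| / 2 := by linarith [this.2]
        rw [abs_of_neg hneg] at this; linarith
      have h2 : (0:ℝ) < (x + δ / 2 - x) ^ m := by
        apply pow_pos; linarith
      have h3 : f (x + δ / 2) < 0 := by
        rw [hL]
        apply div_neg_of_neg_of_pos
        · exact mul_neg_of_neg_of_pos h1 h2
        · exact_mod_cast Nat.factorial_pos m
      linarith [hpos (x + δ / 2)]
    · exact hpos'
  constructor
  · -- even
    by_contra hodd
    rw [Nat.not_even_iff_odd] at hodd
    obtain ⟨ξ, hξ, hL⟩ := lagrange hm hfm hvan (t := x - δ / 2) (ne_of_lt (by linarith))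
    have hmin : min (x - δ / 2) x = x - δ / 2 := min_eq_left (by linarith)
    have hmax : max (x - δ / 2) x = x := max_eq_right (by linarith)
    rw [hmin, hmax] at hξ
    have hξd : |ξ - x| < δ := by
      rcases hξ with ⟨h1, h2⟩; rw [abs_lt]; constructor <;> linarith
    have h1 : 0 < iteratedDeriv m f ξ := by
      have := hnear ξ hξd
      rw [abs_lt] at this
      have h' : a - |a| / 2 < iteratedDeriv m f ξ := by linarith [this.1]
      rw [abs_of_pos hapos] at h'; linarith
    have h2 : (x - δ / 2 - x) ^ m < 0 := hodd.pow_neg (by linarith)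
    have h3 : f (x - δ / 2) < 0 := by
      rw [hL]
      apply div_neg_of_neg_of_pos
      · exact mul_neg_of_pos_of_neg h1 h2
      · exact_mod_cast Nat.factorial_pos m
    linarith [hpos (x - δ / 2)]
  · exact hapos

lemma L_lower (hf : ContDiff ℝ M f) (hm : 0 < m) (hmM : m ≤ M)
    (hvan : ∀ j < m, iteratedDeriv j f x = 0) (ha : 0 < iteratedDeriv m f x) (heven : Even m) :
    ∃ δ > 0, ∀ t, |t - x| < δ →
      iteratedDeriv m f x / (2 * m.factorial) * (t - x) ^ m ≤ f t := by
  set a := iteratedDeriv m f x with ha'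
  have hfm : ContDiff ℝ m f := hf.of_le (by exact_mod_cast hmM)
  obtain ⟨δ, hδ, hnear⟩ := cont_near (x := x) hf hmM (half_pos ha)
  refine ⟨δ, hδ, fun t htd => ?_⟩
  rcases eq_or_ne t x with rfl | htx
  · have hfx : f t = 0 := by
      have := hvan 0 hm; rwa [iteratedDeriv_zero] at this
    simp [hfx, zero_pow hm.ne']
  · obtain ⟨ξ, hξ, hL⟩ := lagrange hm hfm hvan htx
    have hξd : |ξ - x| < δ := xi_bound hξ htd
    have h1 : a / 2 ≤ iteratedDeriv m f ξ := by
      have := hnear ξ hξd; rw [abs_lt] at this; linarith [this.1]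
    have h2 : (0:ℝ) ≤ (t - x) ^ m := heven.pow_nonneg _
    rw [hL]
    rw [div_mul_eq_mul_div, div_le_div_iff₀ (by positivity) (by exact_mod_cast Nat.factorial_pos m)]
    have : a / 2 * (t - x) ^ m ≤ iteratedDeriv m f ξ * (t - x) ^ m :=
      mul_le_mul_of_nonneg_right h1 h2
    have hfac : (0:ℝ) < m.factorial := by exact_mod_cast Nat.factorial_pos m
    nlinarith

lemma L_upper (hf : ContDiff ℝ M f) (hm : 0 < m) (hmM : m ≤ M)
    (hvan : ∀ j < m, iteratedDeriv j f x = 0) :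
    ∃ δ > 0, ∃ C > 0, ∀ t, |t - x| < δ → |f t| ≤ C * |t - x| ^ m := by
  set b := iteratedDeriv m f x with hb
  have hfm : ContDiff ℝ m f := hf.of_le (by exact_mod_cast hmM)
  obtain ⟨δ, hδ, hnear⟩ := cont_near (x := x) hf hmM one_pos
  refine ⟨δ, hδ, |b| + 1, by positivity, fun t htd => ?_⟩
  rcases eq_or_ne t x with rfl | htx
  · have hfx : f t = 0 := by
      have := hvan 0 hm; rwa [iteratedDeriv_zero] at this
    simp [hfx]; positivity
  · obtain ⟨ξ, hξ, hL⟩ := lagrange hm hfm hvan htx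
    have hξd : |ξ - x| < δ := xi_bound hξ htd
    have h1 : |iteratedDeriv m f ξ| ≤ |b| + 1 := by
      have := hnear ξ hξd
      calc |iteratedDeriv m f ξ| ≤ |iteratedDeriv m f ξ - b| + |b| := by
            simpa using abs_add_le (iteratedDeriv m f ξ - b) b
        _ ≤ |b| + 1 := by linarith
    have hfac : (1:ℝ) ≤ m.factorial := by exact_mod_cast m.factorial_pos
    rw [hL, abs_div, abs_mul, abs_pow]
    rw [div_le_iff₀ (by positivity : (0:ℝ) < |(m.factorial : ℝ)|)]
    have h2 : (0:ℝ) ≤ |t - x| ^ m := by positivity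
    have h3 : |iteratedDeriv m f ξ| * |t - x| ^ m ≤ (|b| + 1) * |t - x| ^ m :=
      mul_le_mul_of_nonneg_right h1 h2
    have h4 : (1:ℝ) ≤ |(m.factorial : ℝ)| := by
      rw [abs_of_pos (by positivity)]; exact hfac
    nlinarith [mul_nonneg (by positivity : (0:ℝ) ≤ (|b| + 1) * |t - x| ^ m) (sub_nonneg.mpr h4),
      mul_le_mul_of_nonneg_left h4 (by positivity : (0:ℝ) ≤ (|b| + 1) * |t - x| ^ m)]

lemma L_notodd (hM : Even M) (hf : ContDiff ℝ M f) (hpos : ∀ t, 0 ≤ f t)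
    (hvan : ∀ j < M + 1, iteratedDeriv j f x = 0) (hne : iteratedDeriv (M + 1) f x ≠ 0) :
    False := by
  set g := iteratedDeriv M f with hgdef
  have hg0 : g x = 0 := hvan M (Nat.lt_succ_self M)
  have hgd : deriv g x ≠ 0 := by
    rw [iteratedDeriv_succ] at hne; exact hne
  have hdiff : DifferentiableAt ℝ g x := by
    by_contra hnd
    exact hgd (deriv_zero_of_not_differentiableAt hnd)
  have hHD : HasDerivAt g (deriv g x) x := hdiff.hasDerivAt
  have hs := hasDerivAt_iff_tendsto_slope.mp hHD
  set c := deriv g x with hc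
  obtain ⟨δ, hδ, hsl⟩ := Metric.tendsto_nhdsWithin_nhds.mp hs (|c| / 2)
    (half_pos (abs_pos.mpr hgd))
  -- find t ≠ x with g < 0 on the open interval between t and x
  obtain ⟨t, htx, hneg⟩ : ∃ t, t ≠ x ∧ (∀ y ∈ Ioo (min t x) (max t x), g y < 0) ∧ |t - x| < δ := by
    rcases hgd.lt_or_gt with hcneg | hcpos
    · refine ⟨x + δ / 2, ne_of_gt (by linarith), fun y hy => ?_, by
        rw [abs_of_nonneg (by linarith : (0:ℝ) ≤ x + δ / 2 - x)]; linarith⟩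
      rw [min_eq_right (by linarith), max_eq_left (by linarith)] at hy
      rcases hy with ⟨h1, h2⟩
      have hyx : y ≠ x := ne_of_gt h1
      have hsly := hsl (mem_compl_singleton_iff.mpr hyx)
        (show dist y x < δ by rw [Real.dist_eq, abs_of_pos (by linarith)]; linarith)
      rw [Real.dist_eq, abs_lt] at hsly
      have hshape : slope g x y = g y / (y - x) := by
        rw [slope_def_field, hg0, sub_zero]
      have hslt : slope g x y < 0 := by
        rw [abs_of_neg hcneg] at hsly; linarith [hsly.2]
      rw [hshape] at hslt
      have := div_neg_iff.mp hslt
      rcases this with ⟨h3, h4⟩ | ⟨h3, h4⟩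
      · linarith
      · exact h3
    · refine ⟨x - δ / 2, ne_of_lt (by linarith), fun y hy => ?_, by
        rw [abs_of_nonpos (by linarith : x - δ / 2 - x ≤ 0)]; linarith⟩
      rw [min_eq_left (by linarith), max_eq_right (by linarith)] at hy
      rcases hy with ⟨h1, h2⟩
      have hyx : y ≠ x := ne_of_lt h2
      have hsly := hsl (mem_compl_singleton_iff.mpr hyx)
        (show dist y x < δ by rw [Real.dist_eq, abs_of_neg (by linarith)]; linarith)
      rw [Real.dist_eq, abs_lt] at hsly
      have hshape : slope g x y = g y / (y - x) := by
        rw [slope_def_field, hg0, sub_zero]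
      have hslt : 0 < slope g x y := by
        rw [abs_of_pos hcpos] at hsly; linarith [hsly.1]
      rw [hshape] at hslt
      have := div_pos_iff.mp hslt
      rcases this with ⟨h3, h4⟩ | ⟨h3, h4⟩
      · linarith
      · exact h3
  obtain ⟨hneg, _⟩ := hneg
  rcases Nat.eq_zero_or_pos M with hM0 | hMpos
  · subst hM0
    have : g ((t + x) / 2) < 0 := by
      apply hneg
      rcases lt_or_gt_of_ne htx with h | h
      · rw [min_eq_left h.le, max_eq_right h.le]; constructor <;> linarith
      · rw [min_eq_right h.le, max_eq_left h.le]; constructor <;> linarith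
    rw [hgdef, iteratedDeriv_zero] at this
    linarith [hpos ((t + x) / 2)]
  · have hfM : ContDiff ℝ M f := hf
    obtain ⟨ξ, hξ, hL⟩ := lagrange hMpos hfM (fun j hj => hvan j (by omega)) htx
    have h1 : g ξ < 0 := hneg ξ hξ
    have h2 : (0:ℝ) < (t - x) ^ M := hM.pow_pos (sub_ne_zero.mpr htx)
    have h3 : f t < 0 := by
      rw [hL]
      apply div_neg_of_neg_of_pos
      · exact mul_neg_of_neg_of_pos h1 h2
      · exact_mod_cast Nat.factorial_pos M
    linarith [hpos t]
end

section
variable {g h : ℝ → ℝ} {M k : ℕ}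

lemma iD_add (hg : ContDiff ℝ M g) (hh : ContDiff ℝ M h) (hk : k ≤ M) (x : ℝ) :
    iteratedDeriv k (g + h) x = iteratedDeriv k g x + iteratedDeriv k h x := by
  have hg' : ContDiffOn ℝ k g univ := (hg.of_le (by exact_mod_cast hk)).contDiffOn
  have hh' : ContDiffOn ℝ k h univ := (hh.of_le (by exact_mod_cast hk)).contDiffOn
  rw [← iteratedDerivWithin_univ, ← iteratedDerivWithin_univ, ← iteratedDerivWithin_univ]
  exact iteratedDerivWithin_add (mem_univ x) uniqueDiffOn_univ (hg' x (mem_univ x)) (hh' x (mem_univ x))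

lemma iD_smul (c : ℝ) (hg : ContDiff ℝ M g) (hk : k ≤ M) (x : ℝ) :
    iteratedDeriv k (c • g) x = c * iteratedDeriv k g x := by
  have hg' : ContDiffOn ℝ k g univ := (hg.of_le (by exact_mod_cast hk)).contDiffOn
  rw [← iteratedDerivWithin_univ, ← iteratedDerivWithin_univ]
  exact iteratedDerivWithin_const_smul (mem_univ x) uniqueDiffOn_univ c (hg' x (mem_univ x))

lemma iD_sub (hg : ContDiff ℝ M g) (hh : ContDiff ℝ M h) (hk : k ≤ M) (x : ℝ) :
    iteratedDeriv k (g - h) x = iteratedDeriv k g x - iteratedDeriv k h x := by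
  have hg' : ContDiffOn ℝ k g univ := (hg.of_le (by exact_mod_cast hk)).contDiffOn
  have hh' : ContDiffOn ℝ k h univ := (hh.of_le (by exact_mod_cast hk)).contDiffOn
  rw [← iteratedDerivWithin_univ, ← iteratedDerivWithin_univ, ← iteratedDerivWithin_univ]
  exact iteratedDerivWithin_sub (mem_univ x) uniqueDiffOn_univ (hg' x (mem_univ x)) (hh' x (mem_univ x))

end

/-- A Chebyshev space of order `n`: a subspace of `C^{n-1}(ℝ)` of dimension at least `n`,
whose nonzero elements have at most `n-1` zeros counted with multiplicity in `[0, 2π)`,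
consisting of `2π`-periodic functions if `n` is odd and `2π`-antiperiodic functions if
`n` is even. -/
def IsChebyshev (A : Submodule ℝ (ℝ → ℝ)) (n : ℕ) : Prop :=
  (∀ f ∈ A, ContDiff ℝ (n - 1 : ℕ) f) ∧
  ((n : Cardinal) ≤ Module.rank ℝ A) ∧
  (∀ f ∈ A, f ≠ 0 → ZerosAtMost f (n - 1)) ∧
  (Odd n → ∀ f ∈ A, Function.Periodic f (2*π)) ∧
  (Even n → ∀ f ∈ A, Function.Antiperiodic f (2*π))

theorem minimal_function_total_multiplicity (n : ℕ) (A : Submodule ℝ (ℝ → ℝ))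
    (hA : IsChebyshev A (2*n+1))
    (u : ℝ → ℝ) (hu : ContDiff ℝ (2*n : ℕ) u) (hper : Function.Periodic u (2*π))
    (p : Fin n → ℝ) (μ : Fin n → ℕ)
    (hμ : ∀ i, μ i = Set.ncard {j : Fin n | p j = p i})
    (φ : ℝ → ℝ) (hφA : φ ∈ A)
    (hmatch : ∀ i, ∀ k < 2 * μ i, iteratedDeriv k φ (p i) = iteratedDeriv k u (p i))
    (hge : ∀ t, u t ≤ φ t)
    (hmin : ∀ φ' : ℝ → ℝ, φ' ∈ A →
      (∀ i, ∀ k < 2 * μ i, iteratedDeriv k φ' (p i) = iteratedDeriv k u (p i)) →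
      (∀ t, u t ≤ φ' t) → ∀ t, φ t ≤ φ' t) :
    ∃ (s : Finset ℝ) (m : ℝ → ℕ),
      (∀ x ∈ s, x ∈ Set.Ico (0:ℝ) (2*π) ∧ 0 < m x ∧
        VanishesToOrder (fun t => φ t - u t) x (m x)) ∧
      2*n+2 ≤ ∑ x ∈ s, m x := by
  classical
  by_contra hcon
  push_neg at hcon
  have tp : (0:ℝ) < 2*π := by positivity
  set f : ℝ → ℝ := fun t => φ t - u t with hfdef
  have hφC : ContDiff ℝ (2*n : ℕ) φ := by
    have h := hA.1 φ hφA
    simpa using h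
  have hfC : ContDiff ℝ (2*n : ℕ) f := hφC.sub hu
  have hf0 : ∀ t, 0 ≤ f t := fun t => sub_nonneg.mpr (hge t)
  have hφper : Function.Periodic φ (2*π) := hA.2.2.2.1 ⟨n, by ring⟩ φ hφA
  have hfper : Function.Periodic f (2*π) := hφper.sub hper
  -- iterated derivatives of f split
  have hfsub : ∀ k : ℕ, k ≤ 2*n → ∀ x : ℝ,
      iteratedDeriv k f x = iteratedDeriv k φ x - iteratedDeriv k u x := by
    intro k hk x
    have : f = φ - u := rfl
    rw [this]
    exact iD_sub hφC hu hk x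
  -- bounds on μ
  have hμ1 : ∀ i, 1 ≤ μ i ∧ μ i ≤ n := by
    intro i
    have hfin : {j : Fin n | p j = p i}.Finite := Set.toFinite _
    constructor
    · rw [hμ i]
      have : 0 < {j : Fin n | p j = p i}.ncard :=
        (Set.ncard_pos hfin).mpr ⟨i, rfl⟩
      omega
    · rw [hμ i]
      calc {j : Fin n | p j = p i}.ncard ≤ (Set.univ : Set (Fin n)).ncard :=
            Set.ncard_le_ncard (subset_univ _) finite_univ
        _ = n := by rw [Set.ncard_univ, Nat.card_eq_fintype_card, Fintype.card_fin]
  have hmatch' : ∀ i, ∀ k < 2 * μ i, iteratedDeriv k f (p i) = 0 := by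
    intro i k hk
    have hk2 : k ≤ 2*n := by have := (hμ1 i).2; omega
    rw [hfsub k hk2, hmatch i k hk, sub_self]
  have hpz : ∀ i, f (p i) = 0 := by
    intro i
    have := hmatch' i 0 (by have := (hμ1 i).1; omega)
    rwa [iteratedDeriv_zero] at this
  -- order-2 vanishing at every zero
  have vto2 : ∀ x : ℝ, f x = 0 → ∀ j < 2, iteratedDeriv j f x = 0 := by
    intro x hx j hj
    interval_cases j
    · rwa [iteratedDeriv_zero]
    · rw [iteratedDeriv_one]
      have hmin' : IsLocalMin f x :=
        Filter.Eventually.of_forall (fun y => by rw [hx]; exact hf0 y)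
      exact hmin'.deriv_eq_zero
  -- the zero set in one period
  set Z₀ : Set ℝ := {x | x ∈ Ico (0:ℝ) (2*π) ∧ f x = 0} with hZ₀
  have hZfin : Z₀.Finite := by
    by_contra hinf
    have hinf' : Z₀.Infinite := hinf
    obtain ⟨t, hts, htf, hcard⟩ := hinf'.exists_subset_ncard_eq (n+1)
    have key := hcon htf.toFinset (fun _ => 2)
    have h1 : ∀ x ∈ htf.toFinset, x ∈ Set.Ico (0:ℝ) (2*π) ∧ 0 < 2 ∧
        VanishesToOrder f x 2 := by
      intro x hxF
      have hxt : x ∈ t := htf.mem_toFinset.mp hxF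
      have hx : x ∈ Z₀ := hts hxt
      exact ⟨hx.1, by omega, fun j hj => vto2 x hx.2 j hj⟩
    have h2 := key h1
    have hcc : htf.toFinset.card = n + 1 := by
      rw [← Set.ncard_eq_toFinset_card t htf]; exact hcard
    rw [Finset.sum_const, hcc, smul_eq_mul] at h2
    omega
  have hzmem : ∀ x : ℝ, x ∈ Ico (0:ℝ) (2*π) → f x = 0 → x ∈ Z₀ := fun x h1 h2 => ⟨h1, h2⟩
  -- every zero in the period has a nonvanishing derivative of order < 2n+2
  have hex : ∀ x ∈ Z₀, ∃ j, j < 2*n+2 ∧ iteratedDeriv j f x ≠ 0 := by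
    intro x hx
    by_contra hno
    push_neg at hno
    have key := hcon {x} (fun _ => 2*n+2) ?_
    · rw [Finset.sum_singleton] at key; exact lt_irrefl _ key
    · intro y hy
      rw [Finset.mem_singleton] at hy
      subst hy
      exact ⟨hx.1, by show 0 < 2*n+2; omega, fun j hj => hno j hj⟩
  -- the multiplicity function
  set mm : ℝ → ℕ := fun x =>
    if hx : ∃ j, iteratedDeriv j f x ≠ 0 then Nat.find hx else 0 with hmmdef
  have mm_spec : ∀ x ∈ Z₀, iteratedDeriv (mm x) f x ≠ 0 ∧
      (∀ j < mm x, iteratedDeriv j f x = 0) ∧ 0 < mm x ∧ mm x < 2*n+2 := by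
    intro x hx
    obtain ⟨j0, hj0, hj0'⟩ := hex x hx
    have hxe : ∃ j, iteratedDeriv j f x ≠ 0 := ⟨j0, hj0'⟩
    have hmmx : mm x = Nat.find hxe := by rw [hmmdef]; exact dif_pos hxe
    refine ⟨hmmx ▸ Nat.find_spec hxe, ?_, ?_, ?_⟩
    · intro j hj
      rw [hmmx] at hj
      by_contra hne
      exact (Nat.find_min hxe hj) hne
    · rw [hmmx]
      rcases Nat.eq_zero_or_pos (Nat.find hxe) with h0 | h0
      · exfalso
        have := Nat.find_spec hxe
        rw [h0, iteratedDeriv_zero] at this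
        exact this hx.2
      · exact h0
    · rw [hmmx]
      exact lt_of_le_of_lt (Nat.find_min' hxe hj0') hj0
  have mm_min : ∀ x ∈ Z₀, ∀ j, iteratedDeriv j f x = 0 → mm x ≠ j := by
    intro x hx j hj
    intro hcontra
    exact (mm_spec x hx).1 (hcontra ▸ hj)
  have mm_even : ∀ x ∈ Z₀, Even (mm x) ∧ mm x ≤ 2*n ∧ 0 < iteratedDeriv (mm x) f x := by
    intro x hx
    obtain ⟨hne, hvan, hpos, hlt⟩ := mm_spec x hx
    rcases Nat.lt_or_ge (mm x) (2*n+1) with hlt' | hge'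
    · have hmle : mm x ≤ 2*n := by omega
      have := L_sign hfC hf0 hpos hmle hvan hne
      exact ⟨this.1, hmle, this.2⟩
    · exfalso
      have heq : mm x = 2*n+1 := by omega
      refine L_notodd (M := 2*n) ⟨n, by ring⟩ hfC hf0 (x := x) ?_ ?_
      · intro j hj
        exact hvan j (by omega)
      · rw [← heq]; exact hne
  -- reduction to the fundamental interval
  have hred_mem : ∀ x : ℝ, toIcoMod tp 0 x ∈ Ico (0:ℝ) (2*π) := toIcoMod_mem_Ico' tp
  have hred_eq : ∀ (g : ℝ → ℝ), Function.Periodic g (2*π) → ∀ x : ℝ,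
      g (toIcoMod tp 0 x) = g x := by
    intro g hg x
    have h1 : toIcoMod tp 0 x = x - toIcoDiv tp 0 x • (2*π) := rfl
    rw [h1, hg.sub_zsmul_eq]
  have hredD : ∀ (g : ℝ → ℝ), Function.Periodic g (2*π) → ∀ (k : ℕ) (x : ℝ),
      iteratedDeriv k g (toIcoMod tp 0 x) = iteratedDeriv k g x := by
    intro g hg k x
    exact hred_eq (iteratedDeriv k g) (periodic_iteratedDeriv hg k) x
  have hzred : ∀ x : ℝ, f x = 0 → toIcoMod tp 0 x ∈ Z₀ := by
    intro x hx
    refine ⟨hred_mem x, ?_⟩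
    rw [hred_eq f hfper]
    exact hx
  -- multiplicities at the p points
  have hqmem : ∀ i, toIcoMod tp 0 (p i) ∈ Z₀ := fun i => hzred (p i) (hpz i)
  have hqlarge : ∀ i, 2 * μ i ≤ mm (toIcoMod tp 0 (p i)) := by
    intro i
    by_contra hlt
    push_neg at hlt
    have h1 := (mm_spec _ (hqmem i)).1
    rw [hredD f hfper] at h1
    exact h1 (hmatch' i _ hlt)
  -- sum of multiplicities is at most 2n
  set ZF : Finset ℝ := hZfin.toFinset with hZFdef
  have hZFmem : ∀ x, x ∈ ZF ↔ x ∈ Z₀ := fun x => hZfin.mem_toFinset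
  have hsum : ∑ x ∈ ZF, mm x ≤ 2*n := by
    have h1 := hcon ZF mm ?_
    · have h2 : Even (∑ x ∈ ZF, mm x) := by
        refine Finset.sum_induction mm Even (fun a b ha hb => ha.add hb) Even.zero ?_
        intro x hxF
        exact (mm_even x ((hZFmem x).mp hxF)).1
      rw [Nat.even_iff] at h2
      omega
    · intro x hxF
      have hx := (hZFmem x).mp hxF
      exact ⟨hx.1, (mm_spec x hx).2.2.1, fun j hj => (mm_spec x hx).2.1 j hj⟩
  -- construct a nonzero ψ ∈ A vanishing to order mm x at each x ∈ ZF
  have hcd : ∀ g ∈ A, ContDiff ℝ (2*n : ℕ) g := by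
    intro g hg
    have h := hA.1 g hg
    simpa using h
  set T := ((x : {y // y ∈ ZF}) × Fin (mm x.1)) with hT
  have hcardT : Fintype.card T = ∑ x ∈ ZF, mm x := by
    rw [Fintype.card_sigma]
    simp only [Fintype.card_fin]
    exact Finset.sum_coe_sort ZF mm
  have hdbound : ∀ (j : T), (j.2 : ℕ) ≤ 2*n := by
    intro j
    have h1 : (j.2 : ℕ) < mm j.1.1 := j.2.isLt
    have h2 : mm j.1.1 ≤ 2*n := (mm_even j.1.1 ((hZFmem j.1.1).mp j.1.2)).2.1
    omega
  set L : A →ₗ[ℝ] (T → ℝ) :=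
    { toFun := fun g j => iteratedDeriv (j.2 : ℕ) (g : ℝ → ℝ) j.1.1
      map_add' := by
        intro g h
        funext j
        have := iD_add (hcd g g.2) (hcd h h.2) (hdbound j) j.1.1
        simpa using this
      map_smul' := by
        intro c g
        funext j
        have := iD_smul c (hcd g g.2) (hdbound j) j.1.1
        simpa using this } with hLdef
  have hnotinj : ¬Function.Injective L := by
    intro hinj
    have h1 : Module.rank ℝ A ≤ Module.rank ℝ (T → ℝ) := LinearMap.rank_le_of_injective L hinj
    rw [rank_fun'] at h1
    have h3 : 2*n+1 ≤ Fintype.card T := by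
      have h2 := le_trans hA.2.1 h1
      exact_mod_cast h2
    rw [hcardT] at h3
    omega
  obtain ⟨ψ₁, ψ₂, hLeq, hneq⟩ := Function.not_injective_iff.mp hnotinj
  set ψe : A := ψ₁ - ψ₂ with hψe
  have hψe0 : ψe ≠ 0 := sub_ne_zero.mpr hneq
  have hLψ : L ψe = 0 := by rw [map_sub, hLeq, sub_self]
  set ψ : ℝ → ℝ := (ψe : ℝ → ℝ) with hψdef
  have hψmem : ψ ∈ A := ψe.2
  have hψne : ψ ≠ 0 := by
    intro h
    exact hψe0 (Subtype.ext h)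
  have hψvan : ∀ x ∈ ZF, ∀ j < mm x, iteratedDeriv j ψ x = 0 := by
    intro x hxF j hj
    have := congrFun hLψ ⟨⟨x, hxF⟩, ⟨j, hj⟩⟩
    simpa [hLdef] using this
  have hψC : ContDiff ℝ (2*n : ℕ) ψ := hcd ψ hψmem
  have hψper : Function.Periodic ψ (2*π) := hA.2.2.2.1 ⟨n, by ring⟩ ψ hψmem
  -- local comparison bound at each zero of f
  have hloc : ∀ x : ℝ, f x = 0 → ∃ δ > 0, ∃ c > 0, ∀ t, |t - x| < δ → c * |ψ t| ≤ f t := by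
    intro x hx
    set q := toIcoMod tp 0 x with hq
    have hqZ : q ∈ Z₀ := hzred x hx
    set m := mm q with hm
    obtain ⟨heven, hmle, hapos⟩ := mm_even q hqZ
    have hmpos : 0 < m := (mm_spec q hqZ).2.2.1
    have hvanq : ∀ j < m, iteratedDeriv j f q = 0 := (mm_spec q hqZ).2.1
    have hvanx : ∀ j < m, iteratedDeriv j f x = 0 := by
      intro j hj
      rw [← hredD f hfper j x]
      exact hvanq j hj
    have hax : 0 < iteratedDeriv m f x := by
      rw [← hredD f hfper m x]
      exact hapos
    have hψvanx : ∀ j < m, iteratedDeriv j ψ x = 0 := by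
      intro j hj
      rw [← hredD ψ hψper j x]
      exact hψvan q ((hZFmem q).mpr hqZ) j hj
    obtain ⟨δ1, hδ1, hlow⟩ := L_lower hfC hmpos hmle hvanx hax heven
    obtain ⟨δ2, hδ2, C, hC, hup⟩ := L_upper hψC hmpos hmle hψvanx
    refine ⟨min δ1 δ2, lt_min hδ1 hδ2,
      iteratedDeriv m f x / (2 * m.factorial) / C, by positivity, ?_⟩
    intro t htd
    have htd1 : |t - x| < δ1 := lt_of_lt_of_le htd (min_le_left _ _)
    have htd2 : |t - x| < δ2 := lt_of_lt_of_le htd (min_le_right _ _)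
    have h1 := hlow t htd1
    have h2 := hup t htd2
    have h3 : |t - x| ^ m = (t - x) ^ m := heven.pow_abs _
    set a := iteratedDeriv m f x
    have hfac : (0:ℝ) < m.factorial := by exact_mod_cast m.factorial_pos
    calc a / (2 * m.factorial) / C * |ψ t|
        ≤ a / (2 * m.factorial) / C * (C * |t - x| ^ m) := by
          apply mul_le_mul_of_nonneg_left h2
          positivity
      _ = a / (2 * m.factorial) * (t - x) ^ m := by
          rw [← h3]; field_simp
      _ ≤ f t := h1
  -- global comparison bound on a period
  have hIcc : ∃ ε > 0, ∀ t ∈ Icc (0:ℝ) (2*π), ε * |ψ t| ≤ f t := by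
    by_contra hno
    push_neg at hno
    have hseq : ∀ k : ℕ, ∃ t, t ∈ Icc (0:ℝ) (2*π) ∧ f t < (1/((k:ℝ)+1)) * |ψ t| := by
      intro k
      obtain ⟨t, ht, hlt⟩ := hno (1/((k:ℝ)+1)) (by positivity)
      exact ⟨t, ht, hlt⟩
    choose w hw1 hw2 using hseq
    obtain ⟨t₀, ht₀, σ, hσ, hconv⟩ := (isCompact_Icc).tendsto_subseq hw1
    have hcf : Continuous f := hfC.continuous
    have hcψ : Continuous ψ := hψC.continuous
    have hft0 : f t₀ = 0 := by
      have h1 : Filter.Tendsto (fun k => f (w (σ k))) Filter.atTop (nhds (f t₀)) :=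
        (hcf.tendsto t₀).comp hconv
      have hz : Filter.Tendsto (fun k => (1/((σ k : ℝ)+1))) Filter.atTop (nhds 0) :=
        tendsto_one_div_add_atTop_nhds_zero_nat.comp hσ.tendsto_atTop
      have habs : Filter.Tendsto (fun k => |ψ (w (σ k))|) Filter.atTop (nhds |ψ t₀|) :=
        ((hcψ.tendsto t₀).comp hconv).abs
      have h2 : Filter.Tendsto (fun k => (1/((σ k : ℝ)+1)) * |ψ (w (σ k))|) Filter.atTop
          (nhds (0 * |ψ t₀|)) := hz.mul habs
      rw [zero_mul] at h2
      have h3 : f t₀ ≤ 0 :=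
        le_of_tendsto_of_tendsto' h1 h2 (fun k => (hw2 (σ k)).le)
      exact le_antisymm h3 (hf0 t₀)
    obtain ⟨δ, hδ, c, hc, hcb⟩ := hloc t₀ hft0
    have hev1 : ∀ᶠ k in Filter.atTop, |w (σ k) - t₀| < δ := by
      have := hconv.eventually (Metric.ball_mem_nhds t₀ hδ)
      refine this.mono ?_
      intro k hk
      have hk' : dist (w (σ k)) t₀ < δ := hk
      rwa [Real.dist_eq] at hk'
    have hz : Filter.Tendsto (fun k => (1/((σ k : ℝ)+1))) Filter.atTop (nhds 0) :=
      tendsto_one_div_add_atTop_nhds_zero_nat.comp hσ.tendsto_atTop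
    have hev2 : ∀ᶠ k in Filter.atTop, (1/((σ k : ℝ)+1)) < c :=
      hz.eventually_lt_const hc
    obtain ⟨k, hk1, hk2⟩ := (hev1.and hev2).exists
    have hb := hcb (w (σ k)) hk1
    have hlt := hw2 (σ k)
    have hψt : 0 < |ψ (w (σ k))| := by
      rcases lt_or_ge 0 (|ψ (w (σ k))|) with h | h
      · exact h
      · exfalso
        have h0 : |ψ (w (σ k))| = 0 := le_antisymm h (abs_nonneg _)
        rw [h0, mul_zero] at hlt
        exact absurd hlt (not_lt.mpr (hf0 _))
    exact lt_irrefl _ (lt_of_le_of_lt hb (lt_trans hlt (mul_lt_mul_of_pos_right hk2 hψt)))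
  obtain ⟨ε, hε, hglob'⟩ := hIcc
  have hglob : ∀ t : ℝ, ε * |ψ t| ≤ f t := by
    intro t
    have h1 : toIcoMod tp 0 t ∈ Icc (0:ℝ) (2*π) := Ico_subset_Icc_self (hred_mem t)
    have h2 := hglob' _ h1
    rwa [hred_eq f hfper, hred_eq ψ hψper] at h2
  -- use minimality with φ ± ε ψ
  have hψq : ∀ i, ∀ k < 2 * μ i, iteratedDeriv k ψ (p i) = 0 := by
    intro i k hk
    rw [← hredD ψ hψper k (p i)]
    exact hψvan _ ((hZFmem _).mpr (hqmem i)) k (lt_of_lt_of_le hk (hqlarge i))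
  have hεψC : ContDiff ℝ (2*n : ℕ) (ε • ψ) := hψC.const_smul ε
  have hkey : ∀ s : ℝ, s = ε ∨ s = -ε → ∀ t, φ t ≤ φ t + s * ψ t := by
    intro s hs
    have hsψ : (fun t => φ t + s * ψ t) ∈ A := by
      have h1 : φ + s • ψ ∈ A := A.add_mem hφA (A.smul_mem s hψmem)
      exact h1
    have hsm : ∀ i, ∀ k < 2 * μ i,
        iteratedDeriv k (fun t => φ t + s * ψ t) (p i) = iteratedDeriv k u (p i) := by
      intro i k hk
      have hk2 : k ≤ 2*n := by have := (hμ1 i).2; omega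
      have hsm' : ContDiff ℝ (2*n : ℕ) (s • ψ) := hψC.const_smul s
      have h1 : (fun t => φ t + s * ψ t) = φ + s • ψ := rfl
      rw [h1, iD_add (h := s • ψ) hφC hsm' hk2, iD_smul s hψC hk2, hψq i k hk, mul_zero,
        add_zero]
      exact hmatch i k hk
    have hsu : ∀ t, u t ≤ φ t + s * ψ t := by
      intro t
      have h1 := hglob t
      have h2 : |s * ψ t| ≤ ε * |ψ t| := by
        rw [abs_mul]
        rcases hs with rfl | rfl
        · rw [abs_of_pos hε]
        · rw [abs_neg, abs_of_pos hε]
      have h3 : -(s * ψ t) ≤ ε * |ψ t| := (neg_le_abs _).trans h2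
      have h4 : f t = φ t - u t := rfl
      rw [h4] at h1
      linarith
    exact hmin _ hsψ hsm hsu
  have hψ0 : ψ = 0 := by
    funext t
    have h1 := hkey ε (Or.inl rfl) t
    have h2 := hkey (-ε) (Or.inr rfl) t
    have h3 : 0 ≤ ψ t := by
      by_contra hneg
      push_neg at hneg
      have : ε * ψ t < 0 := mul_neg_of_pos_of_neg hε hneg
      linarith
    have h4 : ψ t ≤ 0 := by
      by_contra hpos
      push_neg at hpos
      have : (-ε) * ψ t < 0 := mul_neg_of_neg_of_pos (by linarith) hpos
      linarith
    exact le_antisymm h4 h3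
  exact hψne hψ0
end
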